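/- arXiv:1909.03419 — 9 statements merged into one kernel-verified Lean document; each statement's English description precedes it below -/
import Mathlib

section
/- If ξ_i ≥ 0, ξ_j ≥ 0, ξ_k ≥ 0, then for all positive reals r_i, r_j, r_k one has sin²Θ_i·r_j²·r_k² + sin²Θ_j·r_k²·r_i² + sin²Θ_k·r_i²·r_j² + 2ξ_i·r_i²·r_j·r_k + 2ξ_j·r_j²·r_k·r_i + 2ξ_k·r_k²·r_i·r_j > 0. -/
theorem stmt_1 (Θi Θj Θk : ℝ)
    (hi0 : 0 ≤ Θi) (hi1 : Θi < Real.pi)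
    (hj0 : 0 ≤ Θj) (hj1 : Θj < Real.pi)
    (hk0 : 0 ≤ Θk) (hk1 : Θk < Real.pi)
    (hξi : 0 ≤ Real.cos Θi + Real.cos Θj * Real.cos Θk)
    (hξj : 0 ≤ Real.cos Θj + Real.cos Θk * Real.cos Θi)
    (hξk : 0 ≤ Real.cos Θk + Real.cos Θi * Real.cos Θj)
    (ri rj rk : ℝ) (hri : 0 < ri) (hrj : 0 < rj) (hrk : 0 < rk) :
    0 < Real.sin Θi ^ 2 * rj ^ 2 * rk ^ 2
      + Real.sin Θj ^ 2 * rk ^ 2 * ri ^ 2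
      + Real.sin Θk ^ 2 * ri ^ 2 * rj ^ 2
      + 2 * (Real.cos Θi + Real.cos Θj * Real.cos Θk) * ri ^ 2 * rj * rk
      + 2 * (Real.cos Θj + Real.cos Θk * Real.cos Θi) * rj ^ 2 * rk * ri
      + 2 * (Real.cos Θk + Real.cos Θi * Real.cos Θj) * rk ^ 2 * ri * rj := by
  have t2 : (0:ℝ) ≤ Real.sin Θj ^ 2 * rk ^ 2 * ri ^ 2 := by positivity
  have t3 : (0:ℝ) ≤ Real.sin Θk ^ 2 * ri ^ 2 * rj ^ 2 := by positivity
  have t1 : (0:ℝ) ≤ Real.sin Θi ^ 2 * rj ^ 2 * rk ^ 2 := by positivity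
  have t4 : (0:ℝ) ≤ 2 * (Real.cos Θi + Real.cos Θj * Real.cos Θk) * ri ^ 2 * rj * rk := by
    have : (0:ℝ) ≤ ri ^ 2 * rj * rk := by positivity
    nlinarith
  have t5 : (0:ℝ) ≤ 2 * (Real.cos Θj + Real.cos Θk * Real.cos Θi) * rj ^ 2 * rk * ri := by
    have : (0:ℝ) ≤ rj ^ 2 * rk * ri := by positivity
    nlinarith
  have t6 : (0:ℝ) ≤ 2 * (Real.cos Θk + Real.cos Θi * Real.cos Θj) * rk ^ 2 * ri * rj := by
    have : (0:ℝ) ≤ rk ^ 2 * ri * rj := by positivity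
    nlinarith
  rcases hi0.lt_or_eq with hi | hi
  · have hs : 0 < Real.sin Θi := Real.sin_pos_of_pos_of_lt_pi hi hi1
    have : (0:ℝ) < Real.sin Θi ^ 2 * rj ^ 2 * rk ^ 2 := by positivity
    linarith
  · have hci : Real.cos Θi = 1 := by rw [← hi, Real.cos_zero]
    have hcj : -1 < Real.cos Θj := by
      have := Real.cos_lt_cos_of_nonneg_of_le_pi hj0 le_rfl hj1
      rwa [Real.cos_pi] at this
    have hck : -1 < Real.cos Θk := by
      have := Real.cos_lt_cos_of_nonneg_of_le_pi hk0 le_rfl hk1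
      rwa [Real.cos_pi] at this
    have hcj1 : Real.cos Θj ≤ 1 := Real.cos_le_one _
    have hck1 : Real.cos Θk ≤ 1 := Real.cos_le_one _
    have hpos : 0 < Real.cos Θi + Real.cos Θj * Real.cos Θk := by
      rw [hci]; nlinarith
    have : (0:ℝ) < 2 * (Real.cos Θi + Real.cos Θj * Real.cos Θk) * ri ^ 2 * rj * rk := by
      have h1 : (0:ℝ) < ri ^ 2 * rj * rk := by positivity
      nlinarith
    linarith
end

section
/- If ξ_i ≥ 0, ξ_j ≥ 0, ξ_k ≥ 0, then for all positive reals r_i, r_j, r_k the Euclidean side lengths satisfy the strict triangle inequalities: l_i < l_j + l_k, l_j < l_k + l_i, and l_k < l_i + l_j. -/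
/-- Euclidean side length of a three-circle configuration:
`eucLen I rj rk = √(rj² + rk² + 2·I·rj·rk)`. -/
noncomputable def eucLen (I rj rk : ℝ) : ℝ :=
  Real.sqrt (rj ^ 2 + rk ^ 2 + 2 * I * rj * rk)

private lemma euc_rad_pos (I rj rk : ℝ) (hI : -1 < I) (hrj : 0 < rj) (hrk : 0 < rk) :
    0 < rj ^ 2 + rk ^ 2 + 2 * I * rj * rk := by
  nlinarith [sq_nonneg (rj - rk), mul_pos hrj hrk]

private lemma eucLen_sq (I rj rk : ℝ) (hI : -1 < I) (hrj : 0 < rj) (hrk : 0 < rk) :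
    (eucLen I rj rk) ^ 2 = rj ^ 2 + rk ^ 2 + 2 * I * rj * rk := by
  exact Real.sq_sqrt (le_of_lt (euc_rad_pos I rj rk hI hrj hrk))

private lemma key (Ii Ij Ik ri rj rk : ℝ)
    (hIi : -1 < Ii) (hIi1 : Ii ≤ 1)
    (hIj : -1 < Ij) (hIj1 : Ij ≤ 1)
    (hIk : -1 < Ik) (hIk1 : Ik ≤ 1)
    (hξi : 0 ≤ Ii + Ij * Ik) (hξj : 0 ≤ Ij + Ik * Ii) (hξk : 0 ≤ Ik + Ii * Ij)
    (hri : 0 < ri) (hrj : 0 < rj) (hrk : 0 < rk) :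
    (ri ^ 2 + Ij * ri * rk + Ik * ri * rj - Ii * rj * rk) ^ 2 <
      (rk ^ 2 + ri ^ 2 + 2 * Ij * rk * ri) * (ri ^ 2 + rj ^ 2 + 2 * Ik * ri * rj) := by
  have h1 : 0 < rj ^ 2 * rk ^ 2 * (1 - Ii ^ 2) + 2 * (Ii + Ij * Ik) * ri ^ 2 * rj * rk := by
    rcases lt_or_eq_of_le hIi1 with h | h
    · have : 0 < 1 - Ii ^ 2 := by nlinarith
      have := mul_pos (mul_pos (pow_pos hrj 2) (pow_pos hrk 2)) this
      nlinarith [mul_nonneg (mul_nonneg (mul_nonneg hξi (sq_nonneg ri)) hrj.le) hrk.le]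
    · have hjk : -1 < Ij * Ik := by
        rcases eq_or_lt_of_le hIj1 with h2 | h2
        · rw [h2, one_mul]; exact hIk
        · nlinarith [abs_lt.mpr ⟨hIj, h2⟩, abs_le.mpr ⟨hIk.le, hIk1⟩,
            abs_mul Ij Ik, neg_abs_le (Ij * Ik), abs_nonneg Ij, abs_nonneg Ik]
      have hpos : 0 < Ii + Ij * Ik := by rw [h]; linarith
      subst h
      nlinarith [mul_pos (mul_pos (mul_pos hpos (pow_pos hri 2)) hrj) hrk]
  nlinarith [mul_nonneg (mul_nonneg (mul_nonneg hξj hri.le) (sq_nonneg rj)) hrk.le,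
    mul_nonneg (mul_nonneg (mul_nonneg hξk hri.le) hrj.le) (sq_nonneg rk),
    mul_nonneg (mul_nonneg (sq_nonneg ri) (sq_nonneg rj)) (by nlinarith : (0:ℝ) ≤ 1 - Ik ^ 2),
    mul_nonneg (mul_nonneg (sq_nonneg ri) (sq_nonneg rk)) (by nlinarith : (0:ℝ) ≤ 1 - Ij ^ 2)]

private lemma tri (Ii Ij Ik ri rj rk : ℝ)
    (hIi : -1 < Ii) (hIi1 : Ii ≤ 1)
    (hIj : -1 < Ij) (hIj1 : Ij ≤ 1)
    (hIk : -1 < Ik) (hIk1 : Ik ≤ 1)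
    (hξi : 0 ≤ Ii + Ij * Ik) (hξj : 0 ≤ Ij + Ik * Ii) (hξk : 0 ≤ Ik + Ii * Ij)
    (hri : 0 < ri) (hrj : 0 < rj) (hrk : 0 < rk) :
    eucLen Ii rj rk < eucLen Ij rk ri + eucLen Ik ri rj := by
  set a := eucLen Ii rj rk with ha
  set b := eucLen Ij rk ri with hb
  set c := eucLen Ik ri rj with hc
  have ha2 := eucLen_sq Ii rj rk hIi hrj hrk
  have hb2 := eucLen_sq Ij rk ri hIj hrk hri
  have hc2 := eucLen_sq Ik ri rj hIk hri hrj
  have ha0 : 0 ≤ a := Real.sqrt_nonneg _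
  have hb0 : 0 ≤ b := Real.sqrt_nonneg _
  have hc0 : 0 ≤ c := Real.sqrt_nonneg _
  have hbc : 0 ≤ b * c := mul_nonneg hb0 hc0
  have hkey := key Ii Ij Ik ri rj rk hIi hIi1 hIj hIj1 hIk hIk1 hξi hξj hξk hri hrj hrk
  have hsq : a ^ 2 < (b + c) ^ 2 := by
    have hbc2 : (b * c) ^ 2 = (rk ^ 2 + ri ^ 2 + 2 * Ij * rk * ri) *
        (ri ^ 2 + rj ^ 2 + 2 * Ik * ri * rj) := by
      rw [mul_pow, hb2, hc2]
    nlinarith [sq_nonneg (b * c + (ri ^ 2 + Ij * ri * rk + Ik * ri * rj - Ii * rj * rk))]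
  nlinarith [add_nonneg hb0 hc0]

theorem stmt_2 (Θi Θj Θk : ℝ)
    (hi0 : 0 ≤ Θi) (hi1 : Θi < Real.pi)
    (hj0 : 0 ≤ Θj) (hj1 : Θj < Real.pi)
    (hk0 : 0 ≤ Θk) (hk1 : Θk < Real.pi)
    (hξi : 0 ≤ Real.cos Θi + Real.cos Θj * Real.cos Θk)
    (hξj : 0 ≤ Real.cos Θj + Real.cos Θk * Real.cos Θi)
    (hξk : 0 ≤ Real.cos Θk + Real.cos Θi * Real.cos Θj)
    (ri rj rk : ℝ) (hri : 0 < ri) (hrj : 0 < rj) (hrk : 0 < rk) :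
    eucLen (Real.cos Θi) rj rk < eucLen (Real.cos Θj) rk ri + eucLen (Real.cos Θk) ri rj ∧
    eucLen (Real.cos Θj) rk ri < eucLen (Real.cos Θk) ri rj + eucLen (Real.cos Θi) rj rk ∧
    eucLen (Real.cos Θk) ri rj < eucLen (Real.cos Θi) rj rk + eucLen (Real.cos Θj) rk ri := by
  have hci : -1 < Real.cos Θi := by
    have := Real.cos_lt_cos_of_nonneg_of_le_pi hi0 le_rfl hi1
    rwa [Real.cos_pi] at this
  have hcj : -1 < Real.cos Θj := by
    have := Real.cos_lt_cos_of_nonneg_of_le_pi hj0 le_rfl hj1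
    rwa [Real.cos_pi] at this
  have hck : -1 < Real.cos Θk := by
    have := Real.cos_lt_cos_of_nonneg_of_le_pi hk0 le_rfl hk1
    rwa [Real.cos_pi] at this
  refine ⟨tri _ _ _ _ _ _ hci (Real.cos_le_one _) hcj (Real.cos_le_one _) hck (Real.cos_le_one _)
      hξi hξj hξk hri hrj hrk, ?_, ?_⟩
  · have := tri (Real.cos Θj) (Real.cos Θk) (Real.cos Θi) rj rk ri hcj (Real.cos_le_one _)
      hck (Real.cos_le_one _) hci (Real.cos_le_one _) (by linarith) (by linarith) (by linarith)
      hrj hrk hri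
    linarith
  · have := tri (Real.cos Θk) (Real.cos Θi) (Real.cos Θj) rk ri rj hck (Real.cos_le_one _)
      hci (Real.cos_le_one _) hcj (Real.cos_le_one _) (by linarith) (by linarith) (by linarith)
      hrk hri hrj
    linarith
end

section
/- If ξ_i ≥ 0, ξ_j ≥ 0, ξ_k ≥ 0, then for all positive reals r_i, r_j, r_k the hyperbolic side lengths satisfy (cosh l_i · cosh l_j − cosh l_k)² < sinh² l_i · sinh² l_j, and consequently the strict triangle inequalities l_i < l_j + l_k, l_j < l_k + l_i, l_k < l_i + l_j hold. -/
set_option maxHeartbeats 1000000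

/-- Key algebraic positivity: `1 + 2 C_i C_j C_k - C_i^2 - C_j^2 - C_k^2 > 0`. -/
lemma key_pos (Ii Ij Ik si sj sk ai aj ak : ℝ)
    (hIi : -1 < Ii) (hIi' : Ii ≤ 1) (hIj : -1 < Ij) (hIj' : Ij ≤ 1)
    (hIk : -1 < Ik) (hIk' : Ik ≤ 1)
    (hξi : 0 ≤ Ii + Ij * Ik) (hξj : 0 ≤ Ij + Ik * Ii) (hξk : 0 ≤ Ik + Ii * Ij)
    (hsi : 0 < si) (hsj : 0 < sj) (hsk : 0 < sk)
    (hai0 : 0 < ai) (haj0 : 0 < aj) (hak0 : 0 < ak)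
    (hai : ai ^ 2 = 1 + si ^ 2) (haj : aj ^ 2 = 1 + sj ^ 2) (hak : ak ^ 2 = 1 + sk ^ 2) :
    0 < 1 + 2 * ((aj * ak + Ii * sj * sk) * (ak * ai + Ij * sk * si) * (ai * aj + Ik * si * sj))
      - (aj * ak + Ii * sj * sk) ^ 2 - (ak * ai + Ij * sk * si) ^ 2
      - (ai * aj + Ik * si * sj) ^ 2 := by
  have hid : 1 + 2 * ((aj * ak + Ii * sj * sk) * (ak * ai + Ij * sk * si) *
        (ai * aj + Ik * si * sj))
      - (aj * ak + Ii * sj * sk) ^ 2 - (ak * ai + Ij * sk * si) ^ 2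
      - (ai * aj + Ik * si * sj) ^ 2 =
      sj ^ 2 * sk ^ 2 * (1 - Ii ^ 2) + si ^ 2 * sk ^ 2 * (1 - Ij ^ 2)
      + si ^ 2 * sj ^ 2 * (1 - Ik ^ 2)
      + 2 * (si ^ 2 * sj ^ 2 * sk ^ 2) * (1 + Ii * (Ij * Ik))
      + 2 * (si * (sj * sk)) *
        (sk * (ai * aj) * (Ik + Ii * Ij) + sj * (ai * ak) * (Ij + Ik * Ii)
          + si * (aj * ak) * (Ii + Ij * Ik)) := by
    linear_combination
      (-ak ^ 2 - aj ^ 2 + 2 * aj ^ 2 * ak ^ 2 + 2 * Ii * sj * sk * aj * ak) *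
        hai +
      (-1 + ak ^ 2 - si ^ 2 + 2 * si ^ 2 * ak ^ 2 + 2 * Ij * si * sk * ai * ak) *
        haj +
      (sj ^ 2 + si ^ 2 + 2 * si ^ 2 * sj ^ 2 + 2 * Ik * si * sj * ai * aj) *
        hak
  rw [hid]
  have bi : Ii ^ 2 ≤ 1 := (sq_le_one_iff_abs_le_one Ii).2 (abs_le.2 ⟨hIi.le, hIi'⟩)
  have bj : Ij ^ 2 ≤ 1 := (sq_le_one_iff_abs_le_one Ij).2 (abs_le.2 ⟨hIj.le, hIj'⟩)
  have bk : Ik ^ 2 ≤ 1 := (sq_le_one_iff_abs_le_one Ik).2 (abs_le.2 ⟨hIk.le, hIk'⟩)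
  have hjk : -1 < Ij * Ik := by nlinarith [mul_pos (by linarith : (0:ℝ) < 1 + Ij) (by linarith : (0:ℝ) < 1 + Ik), mul_nonneg (by linarith : (0:ℝ) ≤ 1 - Ij) (by linarith : (0:ℝ) ≤ 1 - Ik)]
  have hjk' : Ij * Ik ≤ 1 := by nlinarith [mul_nonneg (by linarith : (0:ℝ) ≤ 1 + Ij) (by linarith : (0:ℝ) ≤ 1 - Ik), mul_nonneg (by linarith : (0:ℝ) ≤ 1 - Ij) (by linarith : (0:ℝ) ≤ 1 + Ik)]
  have hprod : -1 ≤ Ii * (Ij * Ik) := by nlinarith [mul_nonneg (by linarith : (0:ℝ) ≤ 1 + Ii) (by linarith : (0:ℝ) ≤ 1 + Ij * Ik), mul_nonneg (by linarith : (0:ℝ) ≤ 1 - Ii) (by linarith : (0:ℝ) ≤ 1 - Ij * Ik)]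
  have t1 : 0 ≤ sj ^ 2 * sk ^ 2 * (1 - Ii ^ 2) :=
    mul_nonneg (by positivity) (by linarith)
  have t2 : 0 ≤ si ^ 2 * sk ^ 2 * (1 - Ij ^ 2) :=
    mul_nonneg (by positivity) (by linarith)
  have t3 : 0 ≤ si ^ 2 * sj ^ 2 * (1 - Ik ^ 2) :=
    mul_nonneg (by positivity) (by linarith)
  have t4 : 0 ≤ 2 * (si ^ 2 * sj ^ 2 * sk ^ 2) * (1 + Ii * (Ij * Ik)) :=
    mul_nonneg (by positivity) (by linarith)
  have t5 : 0 ≤ 2 * (si * (sj * sk)) *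
      (sk * (ai * aj) * (Ik + Ii * Ij) + sj * (ai * ak) * (Ij + Ik * Ii)
        + si * (aj * ak) * (Ii + Ij * Ik)) := by positivity
  rcases lt_or_eq_of_le hIi' with hlt | heq
  · have h1 : 0 < sj ^ 2 * sk ^ 2 * (1 - Ii ^ 2) := by
      have : 0 < 1 - Ii ^ 2 := by nlinarith [mul_pos (by linarith : (0:ℝ) < 1 - Ii) (by linarith : (0:ℝ) < 1 + Ii)]
      positivity
    linarith
  · have h4 : 0 < 2 * (si ^ 2 * sj ^ 2 * sk ^ 2) * (1 + Ii * (Ij * Ik)) := by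
      have h5 : 0 < 1 + Ii * (Ij * Ik) := by rw [← heq]; nlinarith
      positivity
    linarith

theorem stmt_4 (Θi Θj Θk : ℝ)
    (hi0 : 0 ≤ Θi) (hi1 : Θi < Real.pi)
    (hj0 : 0 ≤ Θj) (hj1 : Θj < Real.pi)
    (hk0 : 0 ≤ Θk) (hk1 : Θk < Real.pi)
    (hξi : 0 ≤ Real.cos Θi + Real.cos Θj * Real.cos Θk)
    (hξj : 0 ≤ Real.cos Θj + Real.cos Θk * Real.cos Θi)
    (hξk : 0 ≤ Real.cos Θk + Real.cos Θi * Real.cos Θj)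
    (ri rj rk : ℝ) (hri : 0 < ri) (hrj : 0 < rj) (hrk : 0 < rk)
    (li lj lk : ℝ) (hli : 0 < li) (hlj : 0 < lj) (hlk : 0 < lk)
    (hcli : Real.cosh li = Real.cosh rj * Real.cosh rk + Real.cos Θi * Real.sinh rj * Real.sinh rk)
    (hclj : Real.cosh lj = Real.cosh rk * Real.cosh ri + Real.cos Θj * Real.sinh rk * Real.sinh ri)
    (hclk : Real.cosh lk = Real.cosh ri * Real.cosh rj + Real.cos Θk * Real.sinh ri * Real.sinh rj) :
    (Real.cosh li * Real.cosh lj - Real.cosh lk) ^ 2 < Real.sinh li ^ 2 * Real.sinh lj ^ 2 ∧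
    li < lj + lk ∧ lj < lk + li ∧ lk < li + lj := by
  have hcosm1 : ∀ θ : ℝ, 0 ≤ θ → θ < Real.pi → -1 < Real.cos θ := by
    intro θ h0 h1
    have := Real.cos_lt_cos_of_nonneg_of_le_pi h0 le_rfl h1
    simpa [Real.cos_pi] using this
  have key := key_pos (Real.cos Θi) (Real.cos Θj) (Real.cos Θk)
    (Real.sinh ri) (Real.sinh rj) (Real.sinh rk)
    (Real.cosh ri) (Real.cosh rj) (Real.cosh rk)
    (hcosm1 _ hi0 hi1) (Real.cos_le_one _) (hcosm1 _ hj0 hj1) (Real.cos_le_one _)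
    (hcosm1 _ hk0 hk1) (Real.cos_le_one _) hξi hξj hξk
    (Real.sinh_pos_iff.2 hri) (Real.sinh_pos_iff.2 hrj) (Real.sinh_pos_iff.2 hrk)
    (Real.cosh_pos ri) (Real.cosh_pos rj) (Real.cosh_pos rk)
    (by rw [Real.cosh_sq]; ring) (by rw [Real.cosh_sq]; ring) (by rw [Real.cosh_sq]; ring)
  have hsi2 : Real.sinh li ^ 2 = Real.cosh li ^ 2 - 1 := by
    have := Real.cosh_sq li; linarith
  have hsj2 : Real.sinh lj ^ 2 = Real.cosh lj ^ 2 - 1 := by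
    have := Real.cosh_sq lj; linarith
  have hmain : (Real.cosh li * Real.cosh lj - Real.cosh lk) ^ 2
      < Real.sinh li ^ 2 * Real.sinh lj ^ 2 := by
    rw [hsi2, hsj2, hcli, hclj, hclk]
    rw [hcli, hclj, hclk] at *
    linarith [key]
  have hsinli : 0 < Real.sinh li := Real.sinh_pos_iff.2 hli
  have hsinlj : 0 < Real.sinh lj := Real.sinh_pos_iff.2 hlj
  have hS : 0 < Real.sinh li * Real.sinh lj := mul_pos hsinli hsinlj
  have h1 : Real.cosh lk < Real.cosh li * Real.cosh lj + Real.sinh li * Real.sinh lj := by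
    nlinarith [hmain, hS, sq_nonneg (Real.cosh li * Real.cosh lj - Real.cosh lk + Real.sinh li * Real.sinh lj)]
  have h2 : Real.cosh li * Real.cosh lj - Real.sinh li * Real.sinh lj < Real.cosh lk := by
    nlinarith [hmain, hS, sq_nonneg (Real.cosh li * Real.cosh lj - Real.cosh lk - Real.sinh li * Real.sinh lj)]
  have hca : Real.cosh lk < Real.cosh (li + lj) := by rw [Real.cosh_add]; linarith
  have hcb : Real.cosh (li - lj) < Real.cosh lk := by rw [Real.cosh_sub]; linarith
  have h3 : |lk| < |li + lj| := Real.cosh_lt_cosh.1 hca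
  have h4 : |li - lj| < |lk| := Real.cosh_lt_cosh.1 hcb
  have h5 : lk < li + lj := by
    calc lk ≤ |lk| := le_abs_self _
    _ < |li + lj| := h3
    _ = li + lj := abs_of_pos (by linarith)
  have h6 : |li - lj| < lk := by rwa [abs_of_pos hlk] at h4
  have h7 := abs_lt.1 h6
  exact ⟨hmain, by linarith [h7.1], by linarith [h7.2], h5⟩
end

section
/- Assume ξ_i ≥ 0, ξ_j ≥ 0, ξ_k ≥ 0. For any fixed positive reals r_j, r_k, the Euclidean angle function r_i ↦ ϑ_i(r_i, r_j, r_k) is strictly decreasing on (0, ∞). -/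
/-- The Euclidean inner angle `ϑ_i` at the center of the circle of radius `r_i`
in the three-circle configuration with radii `r_i, r_j, r_k` and cosines of
exterior intersection angles `I_i, I_j, I_k`. -/
noncomputable def eucAngle (Ii Ij Ik ri rj rk : ℝ) : ℝ :=
  Real.arccos ((eucLen Ij rk ri ^ 2 + eucLen Ik ri rj ^ 2 - eucLen Ii rj rk ^ 2) /
    (2 * eucLen Ij rk ri * eucLen Ik ri rj))

private lemma aux_S_pos {a b c : ℝ} (ha1 : a ≤ 1) (ha2 : -1 < a)
    (hb1 : b ≤ 1) (hb2 : -1 < b) (hc1 : c ≤ 1) (hc2 : -1 < c) :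
    0 < 2 + b ^ 2 + c ^ 2 + 4 * a * b * c := by
  rcases lt_or_eq_of_le hb1 with hb | hb
  · nlinarith [mul_pos (by linarith : (0:ℝ) < 1 - b) (by linarith : (0:ℝ) < 1 + b),
      mul_nonneg (by linarith : (0:ℝ) ≤ 1 - c) (by linarith : (0:ℝ) ≤ 1 + c),
      mul_nonneg (by linarith : (0:ℝ) ≤ 1 + a) (sq_nonneg (b + c)),
      mul_nonneg (by linarith : (0:ℝ) ≤ 1 - a) (sq_nonneg (b - c))]
  · rcases lt_or_eq_of_le hc1 with hc | hc
    · nlinarith [mul_pos (by linarith : (0:ℝ) < 1 - c) (by linarith : (0:ℝ) < 1 + c),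
        mul_nonneg (by linarith : (0:ℝ) ≤ 1 + a) (sq_nonneg (b + c)),
        mul_nonneg (by linarith : (0:ℝ) ≤ 1 - a) (sq_nonneg (b - c))]
    · subst hb; subst hc; nlinarith

/-- Positivity of the derivative numerator (times `2·sⱼ·s_k`). -/
private lemma aux_Q_pos {a b c rj rk r : ℝ} (hr : 0 < r) (hrj : 0 < rj) (hrk : 0 < rk)
    (ha1 : a ≤ 1) (ha2 : -1 < a) (hb1 : b ≤ 1) (hb2 : -1 < b) (hc1 : c ≤ 1) (hc2 : -1 < c)
    (hxi : 0 ≤ a + b * c) (hxj : 0 ≤ b + c * a) (hxk : 0 ≤ c + a * b) :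
    0 < 2 * (2 * r + b * rk + c * rj) * ((rk ^ 2 + r ^ 2 + 2 * b * rk * r) *
        (r ^ 2 + rj ^ 2 + 2 * c * r * rj)) -
      (r ^ 2 + b * rk * r + c * rj * r - a * rj * rk) *
        ((2 * r + 2 * b * rk) * (r ^ 2 + rj ^ 2 + 2 * c * r * rj) +
          (rk ^ 2 + r ^ 2 + 2 * b * rk * r) * (2 * r + 2 * c * rj)) := by
  have hS := aux_S_pos ha1 ha2 hb1 hb2 hc1 hc2
  have hT0 : 0 ≤ rj ^ 2 * rk ^ 2 * (rk * (b + c * a) + rj * (c + a * b)) := by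
    have : 0 ≤ rk * (b + c * a) + rj * (c + a * b) :=
      add_nonneg (mul_nonneg hrk.le hxj) (mul_nonneg hrj.le hxk)
    positivity
  have hT1 : 0 < r * (rj * rk * ((rj ^ 2 + rk ^ 2) * (a + b * c) +
      rj * rk * (2 + b ^ 2 + c ^ 2 + 4 * a * b * c))) := by
    have h1 : 0 < (rj ^ 2 + rk ^ 2) * (a + b * c) +
        rj * rk * (2 + b ^ 2 + c ^ 2 + 4 * a * b * c) :=
      add_pos_of_nonneg_of_pos (mul_nonneg (by positivity) hxi) (mul_pos (mul_pos hrj hrk) hS)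
    positivity
  have hT2 : 0 ≤ 3 * r ^ 2 * (rj * rk * (rk * (c + a * b) + rj * (b + c * a))) := by
    have : 0 ≤ rk * (c + a * b) + rj * (b + c * a) :=
      add_nonneg (mul_nonneg hrk.le hxk) (mul_nonneg hrj.le hxj)
    positivity
  have hT3 : 0 ≤ r ^ 3 * (rk ^ 2 * (1 - b ^ 2) + rj ^ 2 * (1 - c ^ 2) +
      2 * rj * rk * (a + b * c)) := by
    have h1 : (0:ℝ) ≤ 1 - b ^ 2 := by nlinarith
    have h2 : (0:ℝ) ≤ 1 - c ^ 2 := by nlinarith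
    have : 0 ≤ rk ^ 2 * (1 - b ^ 2) + rj ^ 2 * (1 - c ^ 2) + 2 * rj * rk * (a + b * c) :=
      add_nonneg (add_nonneg (mul_nonneg (by positivity) h1) (mul_nonneg (by positivity) h2))
        (mul_nonneg (by positivity) hxi)
    positivity
  nlinarith [hT0, hT1, hT2, hT3]

/-- The square of the cosine quotient is at most 1 (triangle inequality / Heron). -/
private lemma aux_P_nonneg {a b c rj rk r : ℝ} (hr : 0 < r) (hrj : 0 < rj) (hrk : 0 < rk)
    (ha1 : a ≤ 1) (ha2 : -1 < a) (hb1 : b ≤ 1) (hb2 : -1 < b) (hc1 : c ≤ 1) (hc2 : -1 < c)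
    (hxi : 0 ≤ a + b * c) (hxj : 0 ≤ b + c * a) (hxk : 0 ≤ c + a * b) :
    (r ^ 2 + b * rk * r + c * rj * r - a * rj * rk) ^ 2 ≤
      (rk ^ 2 + r ^ 2 + 2 * b * rk * r) * (r ^ 2 + rj ^ 2 + 2 * c * r * rj) := by
  have h1 : (0:ℝ) ≤ 1 - b ^ 2 := by nlinarith
  have h2 : (0:ℝ) ≤ 1 - c ^ 2 := by nlinarith
  have h3 : (0:ℝ) ≤ 1 - a ^ 2 := by nlinarith
  have hA : 0 ≤ r ^ 2 * (rk ^ 2 * (1 - b ^ 2) + rj ^ 2 * (1 - c ^ 2) +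
      2 * rj * rk * (a + b * c)) := by
    have : 0 ≤ rk ^ 2 * (1 - b ^ 2) + rj ^ 2 * (1 - c ^ 2) + 2 * rj * rk * (a + b * c) :=
      add_nonneg (add_nonneg (mul_nonneg (by positivity) h1) (mul_nonneg (by positivity) h2))
        (mul_nonneg (by positivity) hxi)
    positivity
  have hB : 0 ≤ r * (2 * rj * rk * (rk * (c + a * b) + rj * (b + c * a))) := by
    have : 0 ≤ rk * (c + a * b) + rj * (b + c * a) :=
      add_nonneg (mul_nonneg hrk.le hxk) (mul_nonneg hrj.le hxj)
    positivity
  have hC : 0 ≤ rj ^ 2 * rk ^ 2 * (1 - a ^ 2) := by positivity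
  nlinarith [hA, hB, hC]

set_option maxHeartbeats 2000000 in
theorem stmt_5 (Θi Θj Θk : ℝ)
    (hi0 : 0 ≤ Θi) (hi1 : Θi < Real.pi)
    (hj0 : 0 ≤ Θj) (hj1 : Θj < Real.pi)
    (hk0 : 0 ≤ Θk) (hk1 : Θk < Real.pi)
    (hξi : 0 ≤ Real.cos Θi + Real.cos Θj * Real.cos Θk)
    (hξj : 0 ≤ Real.cos Θj + Real.cos Θk * Real.cos Θi)
    (hξk : 0 ≤ Real.cos Θk + Real.cos Θi * Real.cos Θj)
    (rj rk : ℝ) (hrj : 0 < rj) (hrk : 0 < rk) :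
    StrictAntiOn (fun ri => eucAngle (Real.cos Θi) (Real.cos Θj) (Real.cos Θk) ri rj rk)
      (Set.Ioi (0 : ℝ)) := by
  set a := Real.cos Θi with ha
  set b := Real.cos Θj with hb
  set c := Real.cos Θk with hc
  have ha1 : a ≤ 1 := Real.cos_le_one _
  have hb1 : b ≤ 1 := Real.cos_le_one _
  have hc1 : c ≤ 1 := Real.cos_le_one _
  have ha2 : -1 < a := by
    have := Real.cos_lt_cos_of_nonneg_of_le_pi hi0 (le_refl Real.pi) hi1
    rwa [Real.cos_pi] at this
  have hb2 : -1 < b := by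
    have := Real.cos_lt_cos_of_nonneg_of_le_pi hj0 (le_refl Real.pi) hj1
    rwa [Real.cos_pi] at this
  have hc2 : -1 < c := by
    have := Real.cos_lt_cos_of_nonneg_of_le_pi hk0 (le_refl Real.pi) hk1
    rwa [Real.cos_pi] at this
  -- the cosine quotient
  set g : ℝ → ℝ := fun x => (x ^ 2 + b * rk * x + c * rj * x - a * rj * rk) /
    (Real.sqrt (rk ^ 2 + x ^ 2 + 2 * b * rk * x) *
      Real.sqrt (x ^ 2 + rj ^ 2 + 2 * c * x * rj)) with hg
  -- positivity of the radicands
  have hu : ∀ x : ℝ, 0 < x → 0 < rk ^ 2 + x ^ 2 + 2 * b * rk * x := by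
    intro x hx; nlinarith [sq_nonneg (x - rk), mul_pos hx hrk]
  have hv : ∀ x : ℝ, 0 < x → 0 < x ^ 2 + rj ^ 2 + 2 * c * x * rj := by
    intro x hx; nlinarith [sq_nonneg (x - rj), mul_pos hx hrj]
  -- g has a positive derivative on Ioi 0
  have hd : ∀ x ∈ Set.Ioi (0:ℝ), ∃ d, 0 < d ∧ HasDerivAt g d x := by
    intro x hx
    have hx0 : (0:ℝ) < x := hx
    have hux := hu x hx0
    have hvx := hv x hx0
    set s := Real.sqrt (rk ^ 2 + x ^ 2 + 2 * b * rk * x) with hs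
    set t := Real.sqrt (x ^ 2 + rj ^ 2 + 2 * c * x * rj) with ht
    have hspos : 0 < s := Real.sqrt_pos.2 hux
    have htpos : 0 < t := Real.sqrt_pos.2 hvx
    have hs2 : s ^ 2 = rk ^ 2 + x ^ 2 + 2 * b * rk * x := Real.sq_sqrt hux.le
    have ht2 : t ^ 2 = x ^ 2 + rj ^ 2 + 2 * c * x * rj := Real.sq_sqrt hvx.le
    have hN : HasDerivAt (fun y : ℝ => y ^ 2 + b * rk * y + c * rj * y - a * rj * rk)
        (2 * x + b * rk + c * rj) x := by
      have h1 : HasDerivAt (fun y : ℝ => y ^ 2) (2 * x) x := by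
        simpa using hasDerivAt_pow 2 x
      have h2 := ((h1.add ((hasDerivAt_id x).const_mul (b * rk))).add
        ((hasDerivAt_id x).const_mul (c * rj))).sub_const (a * rj * rk)
      exact h2.congr_deriv (by ring)
    have hU : HasDerivAt (fun y : ℝ => rk ^ 2 + y ^ 2 + 2 * b * rk * y)
        (2 * x + 2 * b * rk) x := by
      have h1 : HasDerivAt (fun y : ℝ => y ^ 2) (2 * x) x := by
        simpa using hasDerivAt_pow 2 x
      have h2 := (h1.const_add (rk ^ 2)).add ((hasDerivAt_id x).const_mul (2 * b * rk))
      exact h2.congr_deriv (by ring)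
    have hV : HasDerivAt (fun y : ℝ => y ^ 2 + rj ^ 2 + 2 * c * y * rj)
        (2 * x + 2 * c * rj) x := by
      have h1 : HasDerivAt (fun y : ℝ => y ^ 2) (2 * x) x := by
        simpa using hasDerivAt_pow 2 x
      have h2 := (h1.add_const (rj ^ 2)).add
        (((hasDerivAt_id x).const_mul (2 * c)).mul_const rj)
      exact h2.congr_deriv (by ring)
    have hsD : HasDerivAt (fun y : ℝ => Real.sqrt (rk ^ 2 + y ^ 2 + 2 * b * rk * y))
        ((2 * x + 2 * b * rk) / (2 * s)) x := hU.sqrt hux.ne'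
    have htD : HasDerivAt (fun y : ℝ => Real.sqrt (y ^ 2 + rj ^ 2 + 2 * c * y * rj))
        ((2 * x + 2 * c * rj) / (2 * t)) x := hV.sqrt hvx.ne'
    have hden : HasDerivAt (fun y : ℝ => Real.sqrt (rk ^ 2 + y ^ 2 + 2 * b * rk * y) *
        Real.sqrt (y ^ 2 + rj ^ 2 + 2 * c * y * rj))
        ((2 * x + 2 * b * rk) / (2 * s) * t + s * ((2 * x + 2 * c * rj) / (2 * t))) x :=
      hsD.mul htD
    have hst : s * t ≠ 0 := (mul_pos hspos htpos).ne'
    have hgD : HasDerivAt g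
        (((2 * x + b * rk + c * rj) * (s * t) -
          (x ^ 2 + b * rk * x + c * rj * x - a * rj * rk) *
            ((2 * x + 2 * b * rk) / (2 * s) * t + s * ((2 * x + 2 * c * rj) / (2 * t)))) /
          (s * t) ^ 2) x := hN.div hden hst
    refine ⟨_, ?_, hgD⟩
    apply div_pos _ (by positivity)
    -- numerator positivity
    have key := aux_Q_pos (a := a) (b := b) (c := c) (r := x) hx0 hrj hrk
      ha1 ha2 hb1 hb2 hc1 hc2 hξi hξj hξk
    have hmul : ((2 * x + b * rk + c * rj) * (s * t) -
          (x ^ 2 + b * rk * x + c * rj * x - a * rj * rk) *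
            ((2 * x + 2 * b * rk) / (2 * s) * t + s * ((2 * x + 2 * c * rj) / (2 * t)))) *
          (2 * (s * t)) =
        2 * (2 * x + b * rk + c * rj) * (s ^ 2 * t ^ 2) -
          (x ^ 2 + b * rk * x + c * rj * x - a * rj * rk) *
            ((2 * x + 2 * b * rk) * t ^ 2 + s ^ 2 * (2 * x + 2 * c * rj)) := by
      field_simp
    rw [hs2, ht2] at hmul
    have hpos : 0 < ((2 * x + b * rk + c * rj) * (s * t) -
          (x ^ 2 + b * rk * x + c * rj * x - a * rj * rk) *
            ((2 * x + 2 * b * rk) / (2 * s) * t + s * ((2 * x + 2 * c * rj) / (2 * t)))) *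
          (2 * (s * t)) := by
      rw [hmul]; nlinarith [key]
    have h2st : 0 < 2 * (s * t) := by positivity
    nlinarith [hpos, h2st]
  have hmono : StrictMonoOn g (Set.Ioi (0:ℝ)) := by
    apply strictMonoOn_of_deriv_pos (convex_Ioi 0)
    · intro x hx
      exact ((hd x hx).choose_spec.2).continuousAt.continuousWithinAt
    · intro x hx
      rw [interior_Ioi] at hx
      obtain ⟨d, hd0, hdd⟩ := hd x hx
      rw [hdd.deriv]; exact hd0
  -- rewrite eucAngle as arccos ∘ g
  have hangle : ∀ x : ℝ, 0 < x → eucAngle a b c x rj rk = Real.arccos (g x) := by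
    intro x hx
    have hux := hu x hx
    have hvx := hv x hx
    have hli : (0:ℝ) ≤ rj ^ 2 + rk ^ 2 + 2 * a * rj * rk := by
      nlinarith [sq_nonneg (rj - rk), mul_pos hrj hrk]
    unfold eucAngle eucLen
    congr 1
    rw [Real.sq_sqrt (by nlinarith [sq_nonneg (rk - x), mul_pos hx hrk] :
        (0:ℝ) ≤ rk ^ 2 + x ^ 2 + 2 * b * rk * x),
      Real.sq_sqrt (by nlinarith [sq_nonneg (x - rj), mul_pos hx hrj] :
        (0:ℝ) ≤ x ^ 2 + rj ^ 2 + 2 * c * x * rj),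
      Real.sq_sqrt hli]
    have hsp : 0 < Real.sqrt (rk ^ 2 + x ^ 2 + 2 * b * rk * x) := Real.sqrt_pos.2 hux
    have htp : 0 < Real.sqrt (x ^ 2 + rj ^ 2 + 2 * c * x * rj) := Real.sqrt_pos.2 hvx
    rw [hg]
    simp only
    rw [div_eq_div_iff (by positivity : (2:ℝ) * Real.sqrt (rk ^ 2 + x ^ 2 + 2 * b * rk * x) * Real.sqrt (x ^ 2 + rj ^ 2 + 2 * c * x * rj) ≠ 0) (mul_pos hsp htp).ne']
    ring
  -- g stays in [-1, 1]
  have hmem : ∀ x : ℝ, 0 < x → g x ∈ Set.Icc (-1:ℝ) 1 := by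
    intro x hx
    have hux := hu x hx
    have hvx := hv x hx
    have hspos : 0 < Real.sqrt (rk ^ 2 + x ^ 2 + 2 * b * rk * x) := Real.sqrt_pos.2 hux
    have htpos : 0 < Real.sqrt (x ^ 2 + rj ^ 2 + 2 * c * x * rj) := Real.sqrt_pos.2 hvx
    have hs2 := Real.sq_sqrt hux.le
    have ht2 := Real.sq_sqrt hvx.le
    have hP := aux_P_nonneg (a := a) (b := b) (c := c) (r := x) hx hrj hrk
      ha1 ha2 hb1 hb2 hc1 hc2 hξi hξj hξk
    have hstpos : 0 < Real.sqrt (rk ^ 2 + x ^ 2 + 2 * b * rk * x) *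
        Real.sqrt (x ^ 2 + rj ^ 2 + 2 * c * x * rj) := mul_pos hspos htpos
    have hsq : (x ^ 2 + b * rk * x + c * rj * x - a * rj * rk) ^ 2 ≤
        (Real.sqrt (rk ^ 2 + x ^ 2 + 2 * b * rk * x) *
          Real.sqrt (x ^ 2 + rj ^ 2 + 2 * c * x * rj)) ^ 2 := by
      rw [mul_pow, hs2, ht2]; exact hP
    constructor
    · rw [hg]; simp only
      rw [le_div_iff₀ hstpos]
      nlinarith [hsq, hstpos]
    · rw [hg]; simp only
      rw [div_le_one hstpos]
      nlinarith [hsq, hstpos]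
  intro p hp q hq hpq
  have hp0 : (0:ℝ) < p := hp
  have hq0 : (0:ℝ) < q := hq
  simp only [hangle p hp0, hangle q hq0]
  exact Real.strictAntiOn_arccos (hmem p hp0) (hmem q hq0) (hmono hp hq hpq)
end

section
/- Assume ξ_i ≥ 0, ξ_j ≥ 0, ξ_k ≥ 0. For all positive reals r_i, r_j, r_k, in the Euclidean case one has r_j · (∂ϑ_i/∂r_j)(r_i, r_j, r_k) = r_i · (∂ϑ_j/∂r_i)(r_i, r_j, r_k), where ∂ϑ_i/∂r_j denotes the derivative of t ↦ ϑ_i(r_i, t, r_k) at t = r_j and ∂ϑ_j/∂r_i denotes the derivative of t ↦ ϑ_j(t, r_j, r_k) at t = r_i; moreover this common value is ≥ 0. -/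
set_option maxHeartbeats 1600000

lemma step1_abs (a b q c2 N qp : ℝ) (ha : a ≠ 0) (hb : b ≠ 0) (hq : q ≠ 0) :
    -(1 / (q / (2 * a * b))) * ((c2 * (2 * a * b) - N * (2 * a * (1 / (2 * b) * qp))) /
      (2 * a * b) ^ 2) = (N * qp - 2 * c2 * b ^ 2) / (2 * b ^ 2 * q) := by
  field_simp
  ring

lemma euc_key (Ii Ij Ik : ℝ) (hIi : -1 < Ii) (hIi1 : Ii ≤ 1)
    (hIj : -1 < Ij) (hIj1 : Ij ≤ 1) (hIk : -1 < Ik) (hIk1 : Ik ≤ 1)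
    (hξi : 0 ≤ Ii + Ij * Ik) (hξj : 0 ≤ Ij + Ik * Ii) (hξk : 0 ≤ Ik + Ii * Ij)
    (ri rj rk : ℝ) (hri : 0 < ri) (hrj : 0 < rj) (hrk : 0 < rk) :
    HasDerivAt (fun t => eucAngle Ii Ij Ik ri t rk)
      (2 * ri * (rj * rk * (Ij + Ik * Ii) + ri * rk * (Ii + Ij * Ik) + ri * rj * (1 - Ik ^ 2)) /
        ((ri ^ 2 + rj ^ 2 + 2 * Ik * ri * rj) *
          Real.sqrt (4 * ((1 - Ii ^ 2) * (rj * rk) ^ 2 + (1 - Ij ^ 2) * (rk * ri) ^ 2 +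
            (1 - Ik ^ 2) * (ri * rj) ^ 2 + 2 * ri ^ 2 * (rj * rk) * (Ii + Ij * Ik) +
            2 * rj ^ 2 * (rk * ri) * (Ij + Ik * Ii) +
            2 * rk ^ 2 * (ri * rj) * (Ik + Ii * Ij))))) rj := by
  -- abbreviations (plain terms, written out)
  have hA : 0 < rk ^ 2 + ri ^ 2 + 2 * Ij * rk * ri := by
    nlinarith [mul_nonneg (by linarith : (0:ℝ) ≤ 1 - Ij) (sq_nonneg (rk - ri)),
      mul_pos (by linarith : (0:ℝ) < 1 + Ij) (by positivity : (0:ℝ) < (rk + ri) ^ 2)]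
  have hB : 0 < ri ^ 2 + rj ^ 2 + 2 * Ik * ri * rj := by
    nlinarith [mul_nonneg (by linarith : (0:ℝ) ≤ 1 - Ik) (sq_nonneg (ri - rj)),
      mul_pos (by linarith : (0:ℝ) < 1 + Ik) (by positivity : (0:ℝ) < (ri + rj) ^ 2)]
  have hqnn : ∀ t : ℝ, 0 ≤ ri ^ 2 + t ^ 2 + 2 * Ik * ri * t := by
    intro t
    nlinarith [mul_nonneg (by linarith : (0:ℝ) ≤ 1 - Ik) (sq_nonneg (ri - t)),
      mul_nonneg (by linarith : (0:ℝ) ≤ 1 + Ik) (sq_nonneg (ri + t))]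
  have hcnn : ∀ t : ℝ, 0 ≤ t ^ 2 + rk ^ 2 + 2 * Ii * t * rk := by
    intro t
    nlinarith [mul_nonneg (by linarith : (0:ℝ) ≤ 1 - Ii) (sq_nonneg (t - rk)),
      mul_nonneg (by linarith : (0:ℝ) ≤ 1 + Ii) (sq_nonneg (t + rk))]
  have hQpos : 0 < 4 * ((1 - Ii ^ 2) * (rj * rk) ^ 2 + (1 - Ij ^ 2) * (rk * ri) ^ 2 +
      (1 - Ik ^ 2) * (ri * rj) ^ 2 + 2 * ri ^ 2 * (rj * rk) * (Ii + Ij * Ik) +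
      2 * rj ^ 2 * (rk * ri) * (Ij + Ik * Ii) + 2 * rk ^ 2 * (ri * rj) * (Ik + Ii * Ij)) := by
    have t1 : 0 ≤ (1 - Ii ^ 2) * (rj * rk) ^ 2 :=
      mul_nonneg (by nlinarith) (sq_nonneg _)
    have t2 : 0 ≤ (1 - Ij ^ 2) * (rk * ri) ^ 2 :=
      mul_nonneg (by nlinarith) (sq_nonneg _)
    have t4 : 0 ≤ 2 * ri ^ 2 * (rj * rk) * (Ii + Ij * Ik) :=
      mul_nonneg (by positivity) hξi
    have t5 : 0 ≤ 2 * rj ^ 2 * (rk * ri) * (Ij + Ik * Ii) :=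
      mul_nonneg (by positivity) hξj
    by_cases hk1 : Ik = 1
    · have hprod : -1 < Ii * Ij := by
        nlinarith [mul_pos (by linarith : (0:ℝ) < 1 + Ii) (by linarith : (0:ℝ) < 1 + Ij),
          mul_nonneg (by linarith : (0:ℝ) ≤ 1 - Ii) (by linarith : (0:ℝ) ≤ 1 - Ij)]
      have t3 : 0 ≤ (1 - Ik ^ 2) * (ri * rj) ^ 2 := mul_nonneg (by nlinarith) (sq_nonneg _)
      have t6 : 0 < 2 * rk ^ 2 * (ri * rj) * (Ik + Ii * Ij) := by
        subst hk1
        apply mul_pos (by positivity)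
        linarith
      linarith
    · have hklt : Ik < 1 := lt_of_le_of_ne hIk1 hk1
      have t3 : 0 < (1 - Ik ^ 2) * (ri * rj) ^ 2 :=
        mul_pos (by nlinarith) (by positivity)
      have t6 : 0 ≤ 2 * rk ^ 2 * (ri * rj) * (Ik + Ii * Ij) :=
        mul_nonneg (by positivity) hξk
      linarith
  have hsA : 0 < Real.sqrt (rk ^ 2 + ri ^ 2 + 2 * Ij * rk * ri) := Real.sqrt_pos.2 hA
  have hsB : 0 < Real.sqrt (ri ^ 2 + rj ^ 2 + 2 * Ik * ri * rj) := Real.sqrt_pos.2 hB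
  have hsQ : 0 < Real.sqrt (4 * ((1 - Ii ^ 2) * (rj * rk) ^ 2 + (1 - Ij ^ 2) * (rk * ri) ^ 2 +
      (1 - Ik ^ 2) * (ri * rj) ^ 2 + 2 * ri ^ 2 * (rj * rk) * (Ii + Ij * Ik) +
      2 * rj ^ 2 * (rk * ri) * (Ij + Ik * Ii) + 2 * rk ^ 2 * (ri * rj) * (Ik + Ii * Ij))) :=
    Real.sqrt_pos.2 hQpos
  have hsA2 : Real.sqrt (rk ^ 2 + ri ^ 2 + 2 * Ij * rk * ri) ^ 2
      = rk ^ 2 + ri ^ 2 + 2 * Ij * rk * ri := Real.sq_sqrt hA.le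
  have hsB2 : Real.sqrt (ri ^ 2 + rj ^ 2 + 2 * Ik * ri * rj) ^ 2
      = ri ^ 2 + rj ^ 2 + 2 * Ik * ri * rj := Real.sq_sqrt hB.le
  have hsQ2 : Real.sqrt (4 * ((1 - Ii ^ 2) * (rj * rk) ^ 2 + (1 - Ij ^ 2) * (rk * ri) ^ 2 +
      (1 - Ik ^ 2) * (ri * rj) ^ 2 + 2 * ri ^ 2 * (rj * rk) * (Ii + Ij * Ik) +
      2 * rj ^ 2 * (rk * ri) * (Ij + Ik * Ii) + 2 * rk ^ 2 * (ri * rj) * (Ik + Ii * Ij))) ^ 2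
      = 4 * ((1 - Ii ^ 2) * (rj * rk) ^ 2 + (1 - Ij ^ 2) * (rk * ri) ^ 2 +
      (1 - Ik ^ 2) * (ri * rj) ^ 2 + 2 * ri ^ 2 * (rj * rk) * (Ii + Ij * Ik) +
      2 * rj ^ 2 * (rk * ri) * (Ij + Ik * Ii) + 2 * rk ^ 2 * (ri * rj) * (Ik + Ii * Ij)) :=
    Real.sq_sqrt hQpos.le
  -- rewrite the function in a differentiable-friendly form
  have hfun : (fun t => eucAngle Ii Ij Ik ri t rk) = (fun t => Real.arccos
      ((2 * ri ^ 2 + 2 * Ij * rk * ri + 2 * (Ik * ri - Ii * rk) * t) /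
        (2 * Real.sqrt (rk ^ 2 + ri ^ 2 + 2 * Ij * rk * ri) *
          Real.sqrt (ri ^ 2 + t ^ 2 + 2 * Ik * ri * t)))) := by
    funext t
    unfold eucAngle eucLen
    rw [Real.sq_sqrt hA.le, Real.sq_sqrt (hqnn t), Real.sq_sqrt (hcnn t)]
    congr 1
    ring
  rw [hfun]
  -- derivative of the inner quadratic
  have hqder : HasDerivAt (fun t : ℝ => ri ^ 2 + t ^ 2 + 2 * Ik * ri * t)
      (2 * rj + 2 * Ik * ri) rj := by
    have h := ((hasDerivAt_const rj (ri ^ 2)).add (hasDerivAt_pow 2 rj)).add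
      ((hasDerivAt_id rj).const_mul (2 * Ik * ri))
    refine h.congr_deriv ?_
    push_cast
    ring
  -- derivative of the square root
  have hsder : HasDerivAt (fun t : ℝ => Real.sqrt (ri ^ 2 + t ^ 2 + 2 * Ik * ri * t))
      (1 / (2 * Real.sqrt (ri ^ 2 + rj ^ 2 + 2 * Ik * ri * rj)) * (2 * rj + 2 * Ik * ri)) rj := by
    have h := (Real.hasDerivAt_sqrt hB.ne').comp rj hqder
    simpa [Function.comp_def] using h
  -- derivative of the denominator
  have hdder : HasDerivAt (fun t : ℝ => 2 * Real.sqrt (rk ^ 2 + ri ^ 2 + 2 * Ij * rk * ri) *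
      Real.sqrt (ri ^ 2 + t ^ 2 + 2 * Ik * ri * t))
      (2 * Real.sqrt (rk ^ 2 + ri ^ 2 + 2 * Ij * rk * ri) *
        (1 / (2 * Real.sqrt (ri ^ 2 + rj ^ 2 + 2 * Ik * ri * rj)) * (2 * rj + 2 * Ik * ri))) rj :=
    hsder.const_mul _
  -- derivative of the numerator
  have hnder : HasDerivAt (fun t : ℝ => 2 * ri ^ 2 + 2 * Ij * rk * ri + 2 * (Ik * ri - Ii * rk) * t)
      (2 * (Ik * ri - Ii * rk)) rj := by
    have h := ((hasDerivAt_id rj).const_mul (2 * (Ik * ri - Ii * rk))).const_add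
      (2 * ri ^ 2 + 2 * Ij * rk * ri)
    simpa using h
  have hdne : 2 * Real.sqrt (rk ^ 2 + ri ^ 2 + 2 * Ij * rk * ri) *
      Real.sqrt (ri ^ 2 + rj ^ 2 + 2 * Ik * ri * rj) ≠ 0 := by positivity
  have hgder : HasDerivAt (fun t : ℝ =>
      (2 * ri ^ 2 + 2 * Ij * rk * ri + 2 * (Ik * ri - Ii * rk) * t) /
        (2 * Real.sqrt (rk ^ 2 + ri ^ 2 + 2 * Ij * rk * ri) *
          Real.sqrt (ri ^ 2 + t ^ 2 + 2 * Ik * ri * t)))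
      ((2 * (Ik * ri - Ii * rk) * (2 * Real.sqrt (rk ^ 2 + ri ^ 2 + 2 * Ij * rk * ri) *
          Real.sqrt (ri ^ 2 + rj ^ 2 + 2 * Ik * ri * rj)) -
        (2 * ri ^ 2 + 2 * Ij * rk * ri + 2 * (Ik * ri - Ii * rk) * rj) *
          (2 * Real.sqrt (rk ^ 2 + ri ^ 2 + 2 * Ij * rk * ri) *
            (1 / (2 * Real.sqrt (ri ^ 2 + rj ^ 2 + 2 * Ik * ri * rj)) *
              (2 * rj + 2 * Ik * ri)))) /
        (2 * Real.sqrt (rk ^ 2 + ri ^ 2 + 2 * Ij * rk * ri) *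
          Real.sqrt (ri ^ 2 + rj ^ 2 + 2 * Ik * ri * rj)) ^ 2) rj :=
    hnder.div hdder hdne
  have h1u : 1 - ((2 * ri ^ 2 + 2 * Ij * rk * ri + 2 * (Ik * ri - Ii * rk) * rj) / (2 * Real.sqrt (rk ^ 2 + ri ^ 2 + 2 * Ij * rk * ri) * Real.sqrt (ri ^ 2 + rj ^ 2 + 2 * Ik * ri * rj))) ^ 2 = (4 * ((1 - Ii ^ 2) * (rj * rk) ^ 2 + (1 - Ij ^ 2) * (rk * ri) ^ 2 + (1 - Ik ^ 2) * (ri * rj) ^ 2 + 2 * ri ^ 2 * (rj * rk) * (Ii + Ij * Ik) + 2 * rj ^ 2 * (rk * ri) * (Ij + Ik * Ii) + 2 * rk ^ 2 * (ri * rj) * (Ik + Ii * Ij))) / (2 * Real.sqrt (rk ^ 2 + ri ^ 2 + 2 * Ij * rk * ri) * Real.sqrt (ri ^ 2 + rj ^ 2 + 2 * Ik * ri * rj)) ^ 2 := by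
    rw [div_pow, mul_pow, mul_pow, hsA2, hsB2, one_sub_div (by positivity)]
    congr 1
    ring
  have h1upos : 0 < 1 - ((2 * ri ^ 2 + 2 * Ij * rk * ri + 2 * (Ik * ri - Ii * rk) * rj) / (2 * Real.sqrt (rk ^ 2 + ri ^ 2 + 2 * Ij * rk * ri) * Real.sqrt (ri ^ 2 + rj ^ 2 + 2 * Ik * ri * rj))) ^ 2 := by
    rw [h1u]
    positivity
  have huneg : ((2 * ri ^ 2 + 2 * Ij * rk * ri + 2 * (Ik * ri - Ii * rk) * rj) / (2 * Real.sqrt (rk ^ 2 + ri ^ 2 + 2 * Ij * rk * ri) * Real.sqrt (ri ^ 2 + rj ^ 2 + 2 * Ik * ri * rj))) ≠ -1 := by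
    intro h
    rw [h] at h1upos
    norm_num at h1upos
  have hu1 : ((2 * ri ^ 2 + 2 * Ij * rk * ri + 2 * (Ik * ri - Ii * rk) * rj) / (2 * Real.sqrt (rk ^ 2 + ri ^ 2 + 2 * Ij * rk * ri) * Real.sqrt (ri ^ 2 + rj ^ 2 + 2 * Ik * ri * rj))) ≠ 1 := by
    intro h
    rw [h] at h1upos
    norm_num at h1upos
  have hsqrt1u : Real.sqrt (1 - ((2 * ri ^ 2 + 2 * Ij * rk * ri + 2 * (Ik * ri - Ii * rk) * rj) / (2 * Real.sqrt (rk ^ 2 + ri ^ 2 + 2 * Ij * rk * ri) * Real.sqrt (ri ^ 2 + rj ^ 2 + 2 * Ik * ri * rj))) ^ 2) = Real.sqrt (4 * ((1 - Ii ^ 2) * (rj * rk) ^ 2 + (1 - Ij ^ 2) * (rk * ri) ^ 2 + (1 - Ik ^ 2) * (ri * rj) ^ 2 + 2 * ri ^ 2 * (rj * rk) * (Ii + Ij * Ik) + 2 * rj ^ 2 * (rk * ri) * (Ij + Ik * Ii) + 2 * rk ^ 2 * (ri * rj) * (Ik + Ii * Ij))) / (2 * Real.sqrt (rk ^ 2 +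 ri ^ 2 + 2 * Ij * rk * ri) * Real.sqrt (ri ^ 2 + rj ^ 2 + 2 * Ik * ri * rj)) := by
    rw [h1u, show (4 * ((1 - Ii ^ 2) * (rj * rk) ^ 2 + (1 - Ij ^ 2) * (rk * ri) ^ 2 + (1 - Ik ^ 2) * (ri * rj) ^ 2 + 2 * ri ^ 2 * (rj * rk) * (Ii + Ij * Ik) + 2 * rj ^ 2 * (rk * ri) * (Ij + Ik * Ii) + 2 * rk ^ 2 * (ri * rj) * (Ik + Ii * Ij))) / (2 * Real.sqrt (rk ^ 2 + ri ^ 2 + 2 * Ij * rk * ri) * Real.sqrt (ri ^ 2 + rj ^ 2 + 2 * Ik * ri * rj)) ^ 2 = (Real.sqrt (4 * ((1 - Ii ^ 2) * (rj * rk) ^ 2 + (1 - Ij ^ 2) * (rk * ri) ^ 2 + (1 - Ik ^ 2) * (ri * rj) ^ 2 + 2 * ri ^ 2 * (rj * rk) * (Ii + Ij * Ik) + 2 * rj ^ 2 * (rk * ri) * (Ij + Ik * Ii) + 2 * rk ^ 2 * (ri * rj) * (Ik + Ii * Ij))) / (2 * Real.sqrt (rk ^ 2 + ri ^ 2 + 2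 * Ij * rk * ri) * Real.sqrt (ri ^ 2 + rj ^ 2 + 2 * Ik * ri * rj))) ^ 2 by
      rw [div_pow, Real.sq_sqrt hQpos.le], Real.sqrt_sq (by positivity)]
  have step1 : -(1 / (Real.sqrt (4 * ((1 - Ii ^ 2) * (rj * rk) ^ 2 + (1 - Ij ^ 2) * (rk * ri) ^ 2 + (1 - Ik ^ 2) * (ri * rj) ^ 2 + 2 * ri ^ 2 * (rj * rk) * (Ii + Ij * Ik) + 2 * rj ^ 2 * (rk * ri) * (Ij + Ik * Ii) + 2 * rk ^ 2 * (ri * rj) * (Ik + Ii * Ij))) / (2 * Real.sqrt (rk ^ 2 + ri ^ 2 + 2 * Ij * rk * ri) * Real.sqrt (ri ^ 2 + rj ^ 2 + 2 * Ik * ri * rj)))) * ((2 * (Ik * ri - Ii * rk) * (2 * Real.sqrt (rk ^ 2 + ri ^ 2 + 2 * Ij * rk * ri) * Real.sqrt (ri ^ 2 + rj ^ 2 + 2 * Ik * ri * rj)) - (2 * ri ^ 2 + 2 * Ij * rk * ri + 2 * (Ik * ri - Ii * rk) * rj) * (2 * Real.sqrt (rk ^ 2 + ri ^ 2 + 2 *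 Ij * rk * ri) * (1 / (2 * Real.sqrt (ri ^ 2 + rj ^ 2 + 2 * Ik * ri * rj)) * (2 * rj + 2 * Ik * ri)))) / (2 * Real.sqrt (rk ^ 2 + ri ^ 2 + 2 * Ij * rk * ri) * Real.sqrt (ri ^ 2 + rj ^ 2 + 2 * Ik * ri * rj)) ^ 2) = (((2 * ri ^ 2 + 2 * Ij * rk * ri + 2 * (Ik * ri - Ii * rk) * rj) * (2 * rj + 2 * Ik * ri) - 2 * (2 * (Ik * ri - Ii * rk)) * Real.sqrt (ri ^ 2 + rj ^ 2 + 2 * Ik * ri * rj) ^ 2) / (2 * Real.sqrt (ri ^ 2 + rj ^ 2 + 2 * Ik * ri * rj) ^ 2 * Real.sqrt (4 * ((1 - Ii ^ 2) * (rj * rk) ^ 2 + (1 - Ij ^ 2) * (rk * ri) ^ 2 + (1 - Ik ^ 2) * (ri * rj) ^ 2 + 2 * ri ^ 2 * (rj * rk) * (Ii + Ij * Ik) + 2 * rj ^ 2 * (rk * ri) * (Ij + Ik * Ii) + 2 * rk ^ 2 * (ri * rj) * (Ik + Ii * Ij))))) := by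
    exact step1_abs _ _ _ _ _ _ hsA.ne' hsB.ne' hsQ.ne'
  have step2 : (((2 * ri ^ 2 + 2 * Ij * rk * ri + 2 * (Ik * ri - Ii * rk) * rj) * (2 * rj + 2 * Ik * ri) - 2 * (2 * (Ik * ri - Ii * rk)) * Real.sqrt (ri ^ 2 + rj ^ 2 + 2 * Ik * ri * rj) ^ 2) / (2 * Real.sqrt (ri ^ 2 + rj ^ 2 + 2 * Ik * ri * rj) ^ 2 * Real.sqrt (4 * ((1 - Ii ^ 2) * (rj * rk) ^ 2 + (1 - Ij ^ 2) * (rk * ri) ^ 2 + (1 - Ik ^ 2) * (ri * rj) ^ 2 + 2 * ri ^ 2 * (rj * rk) * (Ii + Ij * Ik) + 2 * rj ^ 2 * (rk * ri) * (Ij + Ik * Ii) + 2 * rk ^ 2 * (ri * rj) * (Ik + Ii * Ij))))) = (2 * ri * (rj * rk * (Ij + Ik * Ii) + ri * rk * (Ii + Ij * Ik) + ri * rj * (1 - Ik ^ 2)) / ((ri ^ 2 + rj ^ 2 + 2 * Ik * ri * rj) * Real.sqrt (4 * ((1 - Ii ^ 2) * (rj * rk) ^ 2 + (1 - Ij ^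 2) * (rk * ri) ^ 2 + (1 - Ik ^ 2) * (ri * rj) ^ 2 + 2 * ri ^ 2 * (rj * rk) * (Ii + Ij * Ik) + 2 * rj ^ 2 * (rk * ri) * (Ij + Ik * Ii) + 2 * rk ^ 2 * (ri * rj) * (Ik + Ii * Ij))))) := by
    rw [hsB2, div_eq_div_iff (by positivity) (by positivity)]
    ring
  have hval : -(1 / Real.sqrt (1 - ((2 * ri ^ 2 + 2 * Ij * rk * ri + 2 * (Ik * ri - Ii * rk) * rj) / (2 * Real.sqrt (rk ^ 2 + ri ^ 2 + 2 * Ij * rk * ri) * Real.sqrt (ri ^ 2 + rj ^ 2 + 2 * Ik * ri * rj))) ^ 2)) * ((2 * (Ik * ri - Ii * rk) * (2 * Real.sqrt (rk ^ 2 + ri ^ 2 + 2 * Ij * rk * ri) * Real.sqrt (ri ^ 2 + rj ^ 2 + 2 * Ik * ri * rj)) - (2 * ri ^ 2 + 2 * Ij * rk * ri + 2 * (Ik * ri - Ii * rk) * rj) * (2 * Real.sqrt (rk ^ 2 + ri ^ 2 + 2 * Ij * rk * ri) * (1 / (2 * Real.sqrt (ri ^ 2 + rj ^ 2 + 2 *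 Ik * ri * rj)) * (2 * rj + 2 * Ik * ri)))) / (2 * Real.sqrt (rk ^ 2 + ri ^ 2 + 2 * Ij * rk * ri) * Real.sqrt (ri ^ 2 + rj ^ 2 + 2 * Ik * ri * rj)) ^ 2) = (2 * ri * (rj * rk * (Ij + Ik * Ii) + ri * rk * (Ii + Ij * Ik) + ri * rj * (1 - Ik ^ 2)) / ((ri ^ 2 + rj ^ 2 + 2 * Ik * ri * rj) * Real.sqrt (4 * ((1 - Ii ^ 2) * (rj * rk) ^ 2 + (1 - Ij ^ 2) * (rk * ri) ^ 2 + (1 - Ik ^ 2) * (ri * rj) ^ 2 + 2 * ri ^ 2 * (rj * rk) * (Ii + Ij * Ik) + 2 * rj ^ 2 * (rk * ri) * (Ij + Ik * Ii) + 2 * rk ^ 2 * (ri * rj) * (Ik + Ii * Ij))))) := by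
    rw [hsqrt1u]
    exact step1.trans step2
  have harccos : HasDerivAt (fun t => Real.arccos
      ((2 * ri ^ 2 + 2 * Ij * rk * ri + 2 * (Ik * ri - Ii * rk) * t) /
        (2 * Real.sqrt (rk ^ 2 + ri ^ 2 + 2 * Ij * rk * ri) * Real.sqrt (ri ^ 2 + t ^ 2 + 2 * Ik * ri * t))))
      (-(1 / Real.sqrt (1 - ((2 * ri ^ 2 + 2 * Ij * rk * ri + 2 * (Ik * ri - Ii * rk) * rj) / (2 * Real.sqrt (rk ^ 2 + ri ^ 2 + 2 * Ij * rk * ri) * Real.sqrt (ri ^ 2 + rj ^ 2 + 2 * Ik * ri * rj))) ^ 2)) * ((2 * (Ik * ri - Ii * rk) * (2 * Real.sqrt (rk ^ 2 + ri ^ 2 + 2 * Ij * rk * ri) * Real.sqrt (ri ^ 2 + rj ^ 2 + 2 * Ik * ri * rj)) - (2 * ri ^ 2 + 2 * Ij * rk * ri + 2 * (Ik * ri - Ii * rk) * rj) * (2 * Real.sqrt (rk ^ 2 + ri ^ 2 + 2 * Ij * rk * ri) * (1 / (2 * Real.sqrt (ri ^ 2 + rj ^ 2 + 2 * Ik * ri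 * rj)) * (2 * rj + 2 * Ik * ri)))) / (2 * Real.sqrt (rk ^ 2 + ri ^ 2 + 2 * Ij * rk * ri) * Real.sqrt (ri ^ 2 + rj ^ 2 + 2 * Ik * ri * rj)) ^ 2)) rj :=
    by have := (Real.hasDerivAt_arccos huneg hu1).comp rj hgder; exact this
  exact hval ▸ harccos

lemma eucLen_comm (I a b : ℝ) : eucLen I a b = eucLen I b a := by
  unfold eucLen
  congr 1
  ring

lemma eucAngle_swap (A B C x y z : ℝ) :
    eucAngle A B C x y z = eucAngle A C B x z y := by
  unfold eucAngle
  rw [eucLen_comm B z x, eucLen_comm C x y, eucLen_comm A y z]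
  congr 1
  ring

theorem stmt_6 (Θi Θj Θk : ℝ)
    (hi0 : 0 ≤ Θi) (hi1 : Θi < Real.pi)
    (hj0 : 0 ≤ Θj) (hj1 : Θj < Real.pi)
    (hk0 : 0 ≤ Θk) (hk1 : Θk < Real.pi)
    (hξi : 0 ≤ Real.cos Θi + Real.cos Θj * Real.cos Θk)
    (hξj : 0 ≤ Real.cos Θj + Real.cos Θk * Real.cos Θi)
    (hξk : 0 ≤ Real.cos Θk + Real.cos Θi * Real.cos Θj)
    (ri rj rk : ℝ) (hri : 0 < ri) (hrj : 0 < rj) (hrk : 0 < rk) :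
    rj * deriv (fun t => eucAngle (Real.cos Θi) (Real.cos Θj) (Real.cos Θk) ri t rk) rj
      = ri * deriv (fun t => eucAngle (Real.cos Θj) (Real.cos Θk) (Real.cos Θi) rj rk t) ri ∧
    0 ≤ rj * deriv (fun t => eucAngle (Real.cos Θi) (Real.cos Θj) (Real.cos Θk) ri t rk) rj := by
  set Ii := Real.cos Θi with hIidef
  set Ij := Real.cos Θj with hIjdef
  set Ik := Real.cos Θk with hIkdef
  have hIi : -1 < Ii := by
    have := Real.cos_lt_cos_of_nonneg_of_le_pi hi0 le_rfl hi1
    rwa [Real.cos_pi] at this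
  have hIj : -1 < Ij := by
    have := Real.cos_lt_cos_of_nonneg_of_le_pi hj0 le_rfl hj1
    rwa [Real.cos_pi] at this
  have hIk : -1 < Ik := by
    have := Real.cos_lt_cos_of_nonneg_of_le_pi hk0 le_rfl hk1
    rwa [Real.cos_pi] at this
  have hIi1 : Ii ≤ 1 := Real.cos_le_one _
  have hIj1 : Ij ≤ 1 := Real.cos_le_one _
  have hIk1 : Ik ≤ 1 := Real.cos_le_one _
  have h1 := euc_key Ii Ij Ik hIi hIi1 hIj hIj1 hIk hIk1 hξi hξj hξk ri rj rk hri hrj hrk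
  have h2 := euc_key Ij Ii Ik hIj hIj1 hIi hIi1 hIk hIk1
    (by nlinarith [hξj]) (by nlinarith [hξi]) (by nlinarith [hξk]) rj ri rk hrj hri hrk
  have hfun2 : (fun t => eucAngle Ij Ik Ii rj rk t) = (fun t => eucAngle Ij Ii Ik rj t rk) := by
    funext t
    exact (eucAngle_swap Ij Ii Ik rj t rk).symm
  have hd1 := h1.deriv
  have hd2 := h2.deriv
  rw [hfun2, hd2, hd1]
  have hQswap : 4 * ((1 - Ij ^ 2) * (ri * rk) ^ 2 + (1 - Ii ^ 2) * (rk * rj) ^ 2 +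
      (1 - Ik ^ 2) * (rj * ri) ^ 2 + 2 * rj ^ 2 * (ri * rk) * (Ij + Ii * Ik) +
      2 * ri ^ 2 * (rk * rj) * (Ii + Ik * Ij) + 2 * rk ^ 2 * (rj * ri) * (Ik + Ij * Ii))
      = 4 * ((1 - Ii ^ 2) * (rj * rk) ^ 2 + (1 - Ij ^ 2) * (rk * ri) ^ 2 +
      (1 - Ik ^ 2) * (ri * rj) ^ 2 + 2 * ri ^ 2 * (rj * rk) * (Ii + Ij * Ik) +
      2 * rj ^ 2 * (rk * ri) * (Ij + Ik * Ii) + 2 * rk ^ 2 * (ri * rj) * (Ik + Ii * Ij)) := by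
    ring
  rw [hQswap]
  have hB : 0 < ri ^ 2 + rj ^ 2 + 2 * Ik * ri * rj := by
    nlinarith [mul_nonneg (by linarith : (0:ℝ) ≤ 1 - Ik) (sq_nonneg (ri - rj)),
      mul_pos (by linarith : (0:ℝ) < 1 + Ik) (by positivity : (0:ℝ) < (ri + rj) ^ 2)]
  have hB' : 0 < rj ^ 2 + ri ^ 2 + 2 * Ik * rj * ri := by nlinarith [hB]
  have hQpos : 0 < 4 * ((1 - Ii ^ 2) * (rj * rk) ^ 2 + (1 - Ij ^ 2) * (rk * ri) ^ 2 +
      (1 - Ik ^ 2) * (ri * rj) ^ 2 + 2 * ri ^ 2 * (rj * rk) * (Ii + Ij * Ik) +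
      2 * rj ^ 2 * (rk * ri) * (Ij + Ik * Ii) + 2 * rk ^ 2 * (ri * rj) * (Ik + Ii * Ij)) := by
    have t1 : 0 ≤ (1 - Ii ^ 2) * (rj * rk) ^ 2 := mul_nonneg (by nlinarith) (sq_nonneg _)
    have t2 : 0 ≤ (1 - Ij ^ 2) * (rk * ri) ^ 2 := mul_nonneg (by nlinarith) (sq_nonneg _)
    have t4 : 0 ≤ 2 * ri ^ 2 * (rj * rk) * (Ii + Ij * Ik) := mul_nonneg (by positivity) hξi
    have t5 : 0 ≤ 2 * rj ^ 2 * (rk * ri) * (Ij + Ik * Ii) := mul_nonneg (by positivity) hξj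
    by_cases hk1 : Ik = 1
    · have hprod : -1 < Ii * Ij := by
        nlinarith [mul_pos (by linarith : (0:ℝ) < 1 + Ii) (by linarith : (0:ℝ) < 1 + Ij),
          mul_nonneg (by linarith : (0:ℝ) ≤ 1 - Ii) (by linarith : (0:ℝ) ≤ 1 - Ij)]
      have t3 : 0 ≤ (1 - Ik ^ 2) * (ri * rj) ^ 2 := mul_nonneg (by nlinarith) (sq_nonneg _)
      have t6 : 0 < 2 * rk ^ 2 * (ri * rj) * (Ik + Ii * Ij) := by
        rw [hk1]
        apply mul_pos (by positivity)
        linarith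
      linarith
    · have hklt : Ik < 1 := lt_of_le_of_ne hIk1 hk1
      have t3 : 0 < (1 - Ik ^ 2) * (ri * rj) ^ 2 := mul_pos (by nlinarith) (by positivity)
      have t6 : 0 ≤ 2 * rk ^ 2 * (ri * rj) * (Ik + Ii * Ij) := mul_nonneg (by positivity) hξk
      linarith
  have hsQ : 0 < Real.sqrt (4 * ((1 - Ii ^ 2) * (rj * rk) ^ 2 + (1 - Ij ^ 2) * (rk * ri) ^ 2 +
      (1 - Ik ^ 2) * (ri * rj) ^ 2 + 2 * ri ^ 2 * (rj * rk) * (Ii + Ij * Ik) +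
      2 * rj ^ 2 * (rk * ri) * (Ij + Ik * Ii) + 2 * rk ^ 2 * (ri * rj) * (Ik + Ii * Ij))) :=
    Real.sqrt_pos.2 hQpos
  constructor
  · rw [show rj ^ 2 + ri ^ 2 + 2 * Ik * rj * ri = ri ^ 2 + rj ^ 2 + 2 * Ik * ri * rj from by ring,
      mul_div_assoc', mul_div_assoc']
    congr 1
    ring
  · have hX : 0 ≤ rj * rk * (Ij + Ik * Ii) + ri * rk * (Ii + Ij * Ik) + ri * rj * (1 - Ik ^ 2) := by
      have u1 : 0 ≤ rj * rk * (Ij + Ik * Ii) := mul_nonneg (by positivity) hξj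
      have u2 : 0 ≤ ri * rk * (Ii + Ij * Ik) := mul_nonneg (by positivity) hξi
      have u3 : 0 ≤ ri * rj * (1 - Ik ^ 2) := mul_nonneg (by positivity) (by nlinarith)
      linarith
    apply mul_nonneg hrj.le
    apply div_nonneg (by positivity) (by positivity)
end

section
/- Assume ξ_i ≥ 0, ξ_j ≥ 0, ξ_k ≥ 0. For all positive reals r_i, r_j, r_k, in the hyperbolic case one has sinh r_j · (∂ϑ_i/∂r_j)(r_i, r_j, r_k) = sinh r_i · (∂ϑ_j/∂r_i)(r_i, r_j, r_k), where ∂ϑ_i/∂r_j denotes the derivative of t ↦ ϑ_i(r_i, t, r_k) at t = r_j and ∂ϑ_j/∂r_i denotes the derivative of t ↦ ϑ_j(t, r_j, r_k) at t = r_i; moreover this common value is ≥ 0. -/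
set_option maxHeartbeats 1000000

lemma alg2 (U q sb sc : ℝ) (hsb : 0 < sb) (hsc : 0 < sc) (hq : 0 ≤ q)
    (hrel : q = sb ^ 2 * sc ^ 2 - U ^ 2) :
    Real.sqrt (1 - (U / (sb * sc)) ^ 2) = Real.sqrt q / (sb * sc) := by
  have h1 : 1 - (U / (sb * sc)) ^ 2 = q / (sb * sc) ^ 2 := by
    field_simp
    linear_combination -hrel
  rw [h1, Real.sqrt_div hq, Real.sqrt_sq (by positivity)]

lemma alg1 (K G H g' h' sb sc sQ : ℝ) (hsb : 0 < sb) (hsc : 0 < sc) (hsQ : 0 < sQ)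
    (hsc2 : sc ^ 2 = G ^ 2 - 1) :
    -(((K * g' - h') * (G ^ 2 - 1) - (K * G - H) * G * g') / ((G ^ 2 - 1) * sQ))
      = -(1 / (sQ / (sb * sc))) *
        (((K * g' - h') * (sb * sc) - (K * G - H) * (sb * (2 * G * g' / (2 * sc)))) / (sb * sc) ^ 2) := by
  rw [← hsc2]
  field_simp

lemma auxDeriv (K : ℝ) (g h : ℝ → ℝ) (x g' h' : ℝ)
    (hg : HasDerivAt g g' x) (hh : HasDerivAt h h' x)
    (hK : 1 < K) (hgx : 1 < g x)
    (hQ : 0 < 1 - h x ^ 2 - K ^ 2 - g x ^ 2 + 2 * h x * K * g x) :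
    HasDerivAt
      (fun t => Real.arccos ((K * g t - h t) /
        (Real.sqrt (K ^ 2 - 1) * Real.sqrt (g t ^ 2 - 1))))
      (-(((K * g' - h') * (g x ^ 2 - 1) - (K * g x - h x) * g x * g') /
        ((g x ^ 2 - 1) *
          Real.sqrt (1 - h x ^ 2 - K ^ 2 - g x ^ 2 + 2 * h x * K * g x)))) x := by
  have hb2 : (0:ℝ) < K ^ 2 - 1 := by nlinarith
  have hc2 : (0:ℝ) < g x ^ 2 - 1 := by nlinarith
  have hsb : 0 < Real.sqrt (K ^ 2 - 1) := Real.sqrt_pos.2 hb2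
  have hsc : 0 < Real.sqrt (g x ^ 2 - 1) := Real.sqrt_pos.2 hc2
  have hsQ : 0 < Real.sqrt (1 - h x ^ 2 - K ^ 2 - g x ^ 2 + 2 * h x * K * g x) :=
    Real.sqrt_pos.2 hQ
  have hsb2 : Real.sqrt (K ^ 2 - 1) ^ 2 = K ^ 2 - 1 := Real.sq_sqrt hb2.le
  have hsc2 : Real.sqrt (g x ^ 2 - 1) ^ 2 = g x ^ 2 - 1 := Real.sq_sqrt hc2.le
  have hu2 : ((K * g x - h x) / (Real.sqrt (K ^ 2 - 1) * Real.sqrt (g x ^ 2 - 1))) ^ 2 < 1 := by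
    rw [div_pow, div_lt_one (by positivity)]
    nlinarith [hsb2, hsc2]
  have hne1 : (K * g x - h x) / (Real.sqrt (K ^ 2 - 1) * Real.sqrt (g x ^ 2 - 1)) ≠ -1 := by
    intro hcon; rw [hcon] at hu2; norm_num at hu2
  have hne2 : (K * g x - h x) / (Real.sqrt (K ^ 2 - 1) * Real.sqrt (g x ^ 2 - 1)) ≠ 1 := by
    intro hcon; rw [hcon] at hu2; norm_num at hu2
  have hnum : HasDerivAt (fun t => K * g t - h t) (K * g' - h') x := (hg.const_mul K).sub hh
  have hq' : HasDerivAt (fun t => g t ^ 2 - 1) (2 * g x * g') x := by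
    have : HasDerivAt (fun t => g t ^ 2 - 1) (((2:ℕ):ℝ) * g x ^ (2 - 1) * g') x :=
      (hg.fun_pow 2).sub_const 1
    convert this using 1
    push_cast
    ring
  have hs : HasDerivAt (fun t => Real.sqrt (g t ^ 2 - 1))
      (2 * g x * g' / (2 * Real.sqrt (g x ^ 2 - 1))) x := hq'.sqrt (ne_of_gt hc2)
  have hden : HasDerivAt (fun t => Real.sqrt (K ^ 2 - 1) * Real.sqrt (g t ^ 2 - 1))
      (Real.sqrt (K ^ 2 - 1) * (2 * g x * g' / (2 * Real.sqrt (g x ^ 2 - 1)))) x :=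
    hs.const_mul _
  have hdiv : HasDerivAt
      (fun t => (K * g t - h t) / (Real.sqrt (K ^ 2 - 1) * Real.sqrt (g t ^ 2 - 1)))
      (((K * g' - h') * (Real.sqrt (K ^ 2 - 1) * Real.sqrt (g x ^ 2 - 1)) -
          (K * g x - h x) *
            (Real.sqrt (K ^ 2 - 1) * (2 * g x * g' / (2 * Real.sqrt (g x ^ 2 - 1))))) /
        (Real.sqrt (K ^ 2 - 1) * Real.sqrt (g x ^ 2 - 1)) ^ 2) x :=
    hnum.div hden (by positivity)
  have harc : HasDerivAt
      (fun t => Real.arccos ((K * g t - h t) /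
        (Real.sqrt (K ^ 2 - 1) * Real.sqrt (g t ^ 2 - 1))))
      (-(1 / Real.sqrt (1 -
          ((K * g x - h x) / (Real.sqrt (K ^ 2 - 1) * Real.sqrt (g x ^ 2 - 1))) ^ 2)) *
        (((K * g' - h') * (Real.sqrt (K ^ 2 - 1) * Real.sqrt (g x ^ 2 - 1)) -
            (K * g x - h x) *
              (Real.sqrt (K ^ 2 - 1) * (2 * g x * g' / (2 * Real.sqrt (g x ^ 2 - 1))))) /
          (Real.sqrt (K ^ 2 - 1) * Real.sqrt (g x ^ 2 - 1)) ^ 2)) x :=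
    HasDerivAt.comp (h₂ := Real.arccos) x (Real.hasDerivAt_arccos hne1 hne2) hdiv
  have halg2 : Real.sqrt (1 -
      ((K * g x - h x) / (Real.sqrt (K ^ 2 - 1) * Real.sqrt (g x ^ 2 - 1))) ^ 2)
      = Real.sqrt (1 - h x ^ 2 - K ^ 2 - g x ^ 2 + 2 * h x * K * g x) /
        (Real.sqrt (K ^ 2 - 1) * Real.sqrt (g x ^ 2 - 1)) := by
    apply alg2 _ _ _ _ hsb hsc hQ.le
    rw [hsb2, hsc2]; ring
  rw [halg2] at harc
  have hval := alg1 K (g x) (h x) g' h' (Real.sqrt (K ^ 2 - 1)) (Real.sqrt (g x ^ 2 - 1))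
    (Real.sqrt (1 - h x ^ 2 - K ^ 2 - g x ^ 2 + 2 * h x * K * g x)) hsb hsc hsQ hsc2
  rw [hval]
  exact harc



/-- `hypCosh I rj rk` is the hyperbolic cosine of the side length `l_i` of
the hyperbolic three-circle configuration:
`cosh l_i = cosh r_j · cosh r_k + I_i · sinh r_j · sinh r_k`. -/
noncomputable def hypCosh (I rj rk : ℝ) : ℝ :=
  Real.cosh rj * Real.cosh rk + I * Real.sinh rj * Real.sinh rk

/-- The hyperbolic inner angle `ϑ_i` at the center of the circle of radius `r_i`
in the hyperbolic three-circle configuration with radii `r_i, r_j, r_k` and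
cosines of exterior intersection angles `I_i, I_j, I_k`:
`ϑ_i = arccos((cosh l_j · cosh l_k − cosh l_i)/(sinh l_j · sinh l_k))`,
where `sinh l = √(cosh² l − 1)` since `l > 0`.  The angles `ϑ_j, ϑ_k` are
obtained by cyclic permutation of the arguments. -/
noncomputable def hypAngle (Ii Ij Ik ri rj rk : ℝ) : ℝ :=
  Real.arccos ((hypCosh Ij rk ri * hypCosh Ik ri rj - hypCosh Ii rj rk) /
    (Real.sqrt (hypCosh Ij rk ri ^ 2 - 1) * Real.sqrt (hypCosh Ik ri rj ^ 2 - 1)))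


lemma mainLemma (Ii Ij Ik : ℝ) (hIi0 : -1 < Ii) (hIi1 : Ii ≤ 1) (hIj0 : -1 < Ij) (hIj1 : Ij ≤ 1)
    (hIk0 : -1 < Ik) (hIk1 : Ik ≤ 1)
    (hXi : 0 ≤ Ii + Ij * Ik) (hXj : 0 ≤ Ij + Ik * Ii) (hXk : 0 ≤ Ik + Ii * Ij)
    (ri rj rk : ℝ) (hri : 0 < ri) (hrj : 0 < rj) (hrk : 0 < rk) :
    Real.sinh rj * deriv (fun t => hypAngle Ii Ij Ik ri t rk) rj
      = Real.sinh ri * deriv (fun t => hypAngle Ij Ik Ii rj rk t) ri ∧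
    0 ≤ Real.sinh rj * deriv (fun t => hypAngle Ii Ij Ik ri t rk) rj := by
  have hSi : 0 < Real.sinh ri := Real.sinh_pos_iff.2 hri
  have hSj : 0 < Real.sinh rj := Real.sinh_pos_iff.2 hrj
  have hSk : 0 < Real.sinh rk := Real.sinh_pos_iff.2 hrk
  have hCi : 0 < Real.cosh ri := Real.cosh_pos _
  have hCj : 0 < Real.cosh rj := Real.cosh_pos _
  have hCk : 0 < Real.cosh rk := Real.cosh_pos _
  have hCi1 : 1 ≤ Real.cosh ri := Real.one_le_cosh ri
  have hCj1 : 1 ≤ Real.cosh rj := Real.one_le_cosh rj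
  have hCk1 : 1 ≤ Real.cosh rk := Real.one_le_cosh rk
  have hchi : Real.cosh ri ^ 2 = Real.sinh ri ^ 2 + 1 := Real.cosh_sq ri
  have hchj : Real.cosh rj ^ 2 = Real.sinh rj ^ 2 + 1 := Real.cosh_sq rj
  have hchk : Real.cosh rk ^ 2 = Real.sinh rk ^ 2 + 1 := Real.cosh_sq rk
  -- the three side-cosines
  have ha1 : 1 < Real.cosh rj * Real.cosh rk + Ii * Real.sinh rj * Real.sinh rk := by
    have hCC : 1 + Real.sinh rj * Real.sinh rk ≤ Real.cosh rj * Real.cosh rk := by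
      nlinarith [sq_nonneg (Real.sinh rj - Real.sinh rk), mul_pos hCj hCk, mul_pos hSj hSk, hchj, hchk]
    nlinarith [mul_pos (show (0:ℝ) < 1 + Ii by linarith) (mul_pos hSj hSk)]
  have hb1 : 1 < Real.cosh rk * Real.cosh ri + Ij * Real.sinh rk * Real.sinh ri := by
    have hCC : 1 + Real.sinh rk * Real.sinh ri ≤ Real.cosh rk * Real.cosh ri := by
      nlinarith [sq_nonneg (Real.sinh rk - Real.sinh ri), mul_pos hCk hCi, mul_pos hSk hSi, hchk, hchi]
    nlinarith [mul_pos (show (0:ℝ) < 1 + Ij by linarith) (mul_pos hSk hSi)]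
  have hc1 : 1 < Real.cosh ri * Real.cosh rj + Ik * Real.sinh ri * Real.sinh rj := by
    have hCC : 1 + Real.sinh ri * Real.sinh rj ≤ Real.cosh ri * Real.cosh rj := by
      nlinarith [sq_nonneg (Real.sinh ri - Real.sinh rj), mul_pos hCi hCj, mul_pos hSi hSj, hchi, hchj]
    nlinarith [mul_pos (show (0:ℝ) < 1 + Ik by linarith) (mul_pos hSi hSj)]
  -- positivity of Q
  have h1i : (0:ℝ) ≤ 1 - Ii ^ 2 := by nlinarith
  have h1j : (0:ℝ) ≤ 1 - Ij ^ 2 := by nlinarith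
  have h1k : (0:ℝ) ≤ 1 - Ik ^ 2 := by nlinarith
  have h3 : (0:ℝ) ≤ 1 + Ii * Ij * Ik := by
    nlinarith [mul_nonneg (mul_nonneg (show (0:ℝ) ≤ 1 + Ii by linarith) (show (0:ℝ) ≤ 1 + Ij by linarith)) (show (0:ℝ) ≤ 1 + Ik by linarith),
      mul_nonneg (mul_nonneg (show (0:ℝ) ≤ 1 + Ii by linarith) (show (0:ℝ) ≤ 1 - Ij by linarith)) (show (0:ℝ) ≤ 1 - Ik by linarith),
      mul_nonneg (mul_nonneg (show (0:ℝ) ≤ 1 - Ii by linarith) (show (0:ℝ) ≤ 1 + Ij by linarith)) (show (0:ℝ) ≤ 1 - Ik by linarith),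
      mul_nonneg (mul_nonneg (show (0:ℝ) ≤ 1 - Ii by linarith) (show (0:ℝ) ≤ 1 - Ij by linarith)) (show (0:ℝ) ≤ 1 + Ik by linarith)]
  have t1 : (0:ℝ) ≤ Real.sinh rj ^ 2 * Real.sinh rk ^ 2 * (1 - Ii ^ 2) := by positivity
  have t2 : (0:ℝ) ≤ Real.sinh ri ^ 2 * Real.sinh rk ^ 2 * (1 - Ij ^ 2) := by positivity
  have t3 : (0:ℝ) ≤ Real.sinh ri ^ 2 * Real.sinh rj ^ 2 * (1 - Ik ^ 2) := by positivity
  have t4 : (0:ℝ) ≤ 2 * Real.sinh ri ^ 2 * Real.sinh rj ^ 2 * Real.sinh rk ^ 2 * (1 + Ii * Ij * Ik) := by positivity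
  have t5 : (0:ℝ) ≤ 2 * Real.sinh ri ^ 2 * Real.sinh rj * Real.sinh rk * Real.cosh rj * Real.cosh rk * (Ii + Ij * Ik) := by
    exact mul_nonneg (mul_pos (mul_pos (mul_pos (mul_pos (mul_pos (by norm_num : (0:ℝ) < 2) (pow_pos hSi 2)) hSj) hSk) hCj) hCk).le hXi
  have t6 : (0:ℝ) ≤ 2 * Real.sinh ri * Real.sinh rj ^ 2 * Real.sinh rk * Real.cosh ri * Real.cosh rk * (Ij + Ik * Ii) := by
    exact mul_nonneg (mul_pos (mul_pos (mul_pos (mul_pos (mul_pos (by norm_num : (0:ℝ) < 2) hSi) (pow_pos hSj 2)) hSk) hCi) hCk).le hXj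
  have t7 : (0:ℝ) ≤ 2 * Real.sinh ri * Real.sinh rj * Real.sinh rk ^ 2 * Real.cosh ri * Real.cosh rj * (Ik + Ii * Ij) := by
    exact mul_nonneg (mul_pos (mul_pos (mul_pos (mul_pos (mul_pos (by norm_num : (0:ℝ) < 2) hSi) hSj) (pow_pos hSk 2)) hCi) hCj).le hXk
  have hSUMpos : 0 <
      Real.sinh rj ^ 2 * Real.sinh rk ^ 2 * (1 - Ii ^ 2)
      + Real.sinh ri ^ 2 * Real.sinh rk ^ 2 * (1 - Ij ^ 2)
      + Real.sinh ri ^ 2 * Real.sinh rj ^ 2 * (1 - Ik ^ 2)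
      + 2 * Real.sinh ri ^ 2 * Real.sinh rj ^ 2 * Real.sinh rk ^ 2 * (1 + Ii * Ij * Ik)
      + 2 * Real.sinh ri ^ 2 * Real.sinh rj * Real.sinh rk * Real.cosh rj * Real.cosh rk * (Ii + Ij * Ik)
      + 2 * Real.sinh ri * Real.sinh rj ^ 2 * Real.sinh rk * Real.cosh ri * Real.cosh rk * (Ij + Ik * Ii)
      + 2 * Real.sinh ri * Real.sinh rj * Real.sinh rk ^ 2 * Real.cosh ri * Real.cosh rj * (Ik + Ii * Ij) := by
    rcases eq_or_lt_of_le hIk1 with hk1 | hk1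
    · have hiijj : -1 < Ii * Ij := by
        nlinarith [mul_pos (show (0:ℝ) < 1 + Ii by linarith) (show (0:ℝ) < 1 + Ij by linarith),
          mul_nonneg (show (0:ℝ) ≤ 1 - Ii by linarith) (show (0:ℝ) ≤ 1 - Ij by linarith)]
      have hxk : 0 < Ik + Ii * Ij := by rw [← hk1] at hiijj; linarith
      have t7' : (0:ℝ) < 2 * Real.sinh ri * Real.sinh rj * Real.sinh rk ^ 2 * Real.cosh ri * Real.cosh rj * (Ik + Ii * Ij) := by
        exact mul_pos (mul_pos (mul_pos (mul_pos (mul_pos (mul_pos (by norm_num : (0:ℝ) < 2) hSi) hSj) (pow_pos hSk 2)) hCi) hCj) hxk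
      linarith
    · have h1k' : (0:ℝ) < 1 - Ik ^ 2 := by nlinarith
      have t3' : (0:ℝ) < Real.sinh ri ^ 2 * Real.sinh rj ^ 2 * (1 - Ik ^ 2) := by positivity
      linarith
  have hQ1pos : 0 < 1 - (Real.cosh rj * Real.cosh rk + Ii * Real.sinh rj * Real.sinh rk) ^ 2
      - (Real.cosh rk * Real.cosh ri + Ij * Real.sinh rk * Real.sinh ri) ^ 2
      - (Real.cosh ri * Real.cosh rj + Ik * Real.sinh ri * Real.sinh rj) ^ 2
      + 2 * (Real.cosh rj * Real.cosh rk + Ii * Real.sinh rj * Real.sinh rk)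
        * (Real.cosh rk * Real.cosh ri + Ij * Real.sinh rk * Real.sinh ri)
        * (Real.cosh ri * Real.cosh rj + Ik * Real.sinh ri * Real.sinh rj) := by
    have hQid : 1 - (Real.cosh rj * Real.cosh rk + Ii * Real.sinh rj * Real.sinh rk) ^ 2
      - (Real.cosh rk * Real.cosh ri + Ij * Real.sinh rk * Real.sinh ri) ^ 2
      - (Real.cosh ri * Real.cosh rj + Ik * Real.sinh ri * Real.sinh rj) ^ 2
      + 2 * (Real.cosh rj * Real.cosh rk + Ii * Real.sinh rj * Real.sinh rk)
        * (Real.cosh rk * Real.cosh ri + Ij * Real.sinh rk * Real.sinh ri)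
        * (Real.cosh ri * Real.cosh rj + Ik * Real.sinh ri * Real.sinh rj)
      = Real.sinh rj ^ 2 * Real.sinh rk ^ 2 * (1 - Ii ^ 2)
      + Real.sinh ri ^ 2 * Real.sinh rk ^ 2 * (1 - Ij ^ 2)
      + Real.sinh ri ^ 2 * Real.sinh rj ^ 2 * (1 - Ik ^ 2)
      + 2 * Real.sinh ri ^ 2 * Real.sinh rj ^ 2 * Real.sinh rk ^ 2 * (1 + Ii * Ij * Ik)
      + 2 * Real.sinh ri ^ 2 * Real.sinh rj * Real.sinh rk * Real.cosh rj * Real.cosh rk * (Ii + Ij * Ik)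
      + 2 * Real.sinh ri * Real.sinh rj ^ 2 * Real.sinh rk * Real.cosh ri * Real.cosh rk * (Ij + Ik * Ii)
      + 2 * Real.sinh ri * Real.sinh rj * Real.sinh rk ^ 2 * Real.cosh ri * Real.cosh rj * (Ik + Ii * Ij) := by
      linear_combination ((-1:ℝ) * (Real.cosh rk)^2 + (2:ℝ) * (Real.cosh rj) * (Real.sinh rj) * (Real.cosh rk) * (Real.sinh rk) * (Ii) + (-1:ℝ) * (Real.cosh rj)^2 + (2:ℝ) * (Real.cosh rj)^2 * (Real.cosh rk)^2) * hchi + ((-1:ℝ) + (1:ℝ) * (Real.cosh rk)^2 + (-1:ℝ) * (Real.sinh ri)^2 + (2:ℝ) * (Real.sinh ri)^2 * (Real.cosh rk)^2 + (2:ℝ) * (Real.cosh ri) * (Real.sinh ri) * (Real.cosh rk) * (Real.sinh rk) * (Ij)) * hchj + ((0:ℝ) + (1:ℝ) * (Real.sinh rj)^2 + (1:ℝ) * (Real.sinh ri)^2 + (2:ℝ) * (Real.sinh ri)^2 * (Real.sinh rj)^2 + (2:ℝ) * (Real.cosh ri) * (Real.sinh ri) * (Real.cosh rj) * (Real.sinh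 rj) * (Ik)) * hchk
    rw [hQid]; exact hSUMpos

  -- derivatives
  have hg1 : HasDerivAt (fun t => Real.cosh ri * Real.cosh t + Ik * Real.sinh ri * Real.sinh t)
      (Real.cosh ri * Real.sinh rj + Ik * Real.sinh ri * Real.cosh rj) rj :=
    ((Real.hasDerivAt_cosh rj).const_mul (Real.cosh ri)).add
      ((Real.hasDerivAt_sinh rj).const_mul (Ik * Real.sinh ri))
  have hh1 : HasDerivAt (fun t => Real.cosh t * Real.cosh rk + Ii * Real.sinh t * Real.sinh rk)
      (Real.sinh rj * Real.cosh rk + Ii * Real.cosh rj * Real.sinh rk) rj :=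
    ((Real.hasDerivAt_cosh rj).mul_const (Real.cosh rk)).add
      (((Real.hasDerivAt_sinh rj).const_mul Ii).mul_const (Real.sinh rk))
  have hd1 : deriv (fun t => hypAngle Ii Ij Ik ri t rk) rj = -((((Real.cosh rk * Real.cosh ri + Ij * Real.sinh rk * Real.sinh ri) * (Real.cosh ri * Real.sinh rj + Ik * Real.sinh ri * Real.cosh rj) - (Real.sinh rj * Real.cosh rk + Ii * Real.cosh rj * Real.sinh rk)) * ((Real.cosh ri * Real.cosh rj + Ik * Real.sinh ri * Real.sinh rj) ^ 2 - 1) - ((Real.cosh rk * Real.cosh ri + Ij * Real.sinh rk * Real.sinh ri) * (Real.cosh ri * Real.cosh rj + Ik * Real.sinh ri * Real.sinh rj) - (Real.cosh rj * Real.cosh rk + Ii * Real.sinh rj * Real.sinh rk)) * (Real.cosh ri * Real.cosh rj + Ik * Real.sinh ri * Real.sinh rj) * (Real.cosh ri * Real.sinh rj + Ik * Real.sinh ri * Real.cosh rj)) / (((Real.cosh ri * Real.cosh rj + Ik * Real.sinh ri * Real.sinh rj) ^ 2 - 1) * Real.sqrt (1 - (Real.cosh rj * Real.cosh rk + Ii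 * Real.sinh rj * Real.sinh rk) ^ 2 - (Real.cosh rk * Real.cosh ri + Ij * Real.sinh rk * Real.sinh ri) ^ 2 - (Real.cosh ri * Real.cosh rj + Ik * Real.sinh ri * Real.sinh rj) ^ 2 + 2 * (Real.cosh rj * Real.cosh rk + Ii * Real.sinh rj * Real.sinh rk) * (Real.cosh rk * Real.cosh ri + Ij * Real.sinh rk * Real.sinh ri) * (Real.cosh ri * Real.cosh rj + Ik * Real.sinh ri * Real.sinh rj)))) :=
    HasDerivAt.deriv (auxDeriv (Real.cosh rk * Real.cosh ri + Ij * Real.sinh rk * Real.sinh ri)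
      (fun t => Real.cosh ri * Real.cosh t + Ik * Real.sinh ri * Real.sinh t)
      (fun t => Real.cosh t * Real.cosh rk + Ii * Real.sinh t * Real.sinh rk)
      rj _ _ hg1 hh1 hb1 hc1 hQ1pos)
  have hg2 : HasDerivAt (fun t => Real.cosh t * Real.cosh rj + Ik * Real.sinh t * Real.sinh rj)
      (Real.sinh ri * Real.cosh rj + Ik * Real.cosh ri * Real.sinh rj) ri :=
    ((Real.hasDerivAt_cosh ri).mul_const (Real.cosh rj)).add
      (((Real.hasDerivAt_sinh ri).const_mul Ik).mul_const (Real.sinh rj))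
  have hh2 : HasDerivAt (fun t => Real.cosh rk * Real.cosh t + Ij * Real.sinh rk * Real.sinh t)
      (Real.cosh rk * Real.sinh ri + Ij * Real.sinh rk * Real.cosh ri) ri :=
    ((Real.hasDerivAt_cosh ri).const_mul (Real.cosh rk)).add
      ((Real.hasDerivAt_sinh ri).const_mul (Ij * Real.sinh rk))
  have hQ2pos : 0 < (1 - (Real.cosh rk * Real.cosh ri + Ij * Real.sinh rk * Real.sinh ri) ^ 2 - (Real.cosh rj * Real.cosh rk + Ii * Real.sinh rj * Real.sinh rk) ^ 2 - (Real.cosh ri * Real.cosh rj + Ik * Real.sinh ri * Real.sinh rj) ^ 2 + 2 * (Real.cosh rk * Real.cosh ri + Ij * Real.sinh rk * Real.sinh ri) * (Real.cosh rj * Real.cosh rk + Ii * Real.sinh rj * Real.sinh rk) * (Real.cosh ri * Real.cosh rj + Ik * Real.sinh ri * Real.sinh rj)) := by linarith [hQ1pos]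
  have hfun2 : (fun t => hypAngle Ij Ik Ii rj rk t)
      = (fun t => Real.arccos (((Real.cosh rj * Real.cosh rk + Ii * Real.sinh rj * Real.sinh rk) * (Real.cosh t * Real.cosh rj + Ik * Real.sinh t * Real.sinh rj)
          - (Real.cosh rk * Real.cosh t + Ij * Real.sinh rk * Real.sinh t)) /
          (Real.sqrt ((Real.cosh rj * Real.cosh rk + Ii * Real.sinh rj * Real.sinh rk) ^ 2 - 1) *
           Real.sqrt ((Real.cosh t * Real.cosh rj + Ik * Real.sinh t * Real.sinh rj) ^ 2 - 1)))) := by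
    funext t
    simp only [hypAngle, hypCosh]
    congr 1
    ring
  have hd2 : deriv (fun t => hypAngle Ij Ik Ii rj rk t) ri = -((((Real.cosh rj * Real.cosh rk + Ii * Real.sinh rj * Real.sinh rk) * (Real.sinh ri * Real.cosh rj + Ik * Real.cosh ri * Real.sinh rj) - (Real.cosh rk * Real.sinh ri + Ij * Real.sinh rk * Real.cosh ri)) * ((Real.cosh ri * Real.cosh rj + Ik * Real.sinh ri * Real.sinh rj) ^ 2 - 1) - ((Real.cosh rj * Real.cosh rk + Ii * Real.sinh rj * Real.sinh rk) * (Real.cosh ri * Real.cosh rj + Ik * Real.sinh ri * Real.sinh rj) - (Real.cosh rk * Real.cosh ri + Ij * Real.sinh rk * Real.sinh ri)) * (Real.cosh ri * Real.cosh rj + Ik * Real.sinh ri * Real.sinh rj) * (Real.sinh ri * Real.cosh rj + Ik * Real.cosh ri * Real.sinh rj)) / (((Real.cosh ri * Real.cosh rj + Ik * Real.sinh ri * Real.sinh rj) ^ 2 - 1) * Real.sqrt (1 - (Real.cosh rk * Real.cosh ri + Ij * Real.sinh rk * Real.sinh ri) ^ 2 - (Real.cosh rj * Real.cosh rk + Ii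 * Real.sinh rj * Real.sinh rk) ^ 2 - (Real.cosh ri * Real.cosh rj + Ik * Real.sinh ri * Real.sinh rj) ^ 2 + 2 * (Real.cosh rk * Real.cosh ri + Ij * Real.sinh rk * Real.sinh ri) * (Real.cosh rj * Real.cosh rk + Ii * Real.sinh rj * Real.sinh rk) * (Real.cosh ri * Real.cosh rj + Ik * Real.sinh ri * Real.sinh rj)))) := by
    rw [hfun2]
    exact HasDerivAt.deriv (auxDeriv (Real.cosh rj * Real.cosh rk + Ii * Real.sinh rj * Real.sinh rk)
      (fun t => Real.cosh t * Real.cosh rj + Ik * Real.sinh t * Real.sinh rj)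
      (fun t => Real.cosh rk * Real.cosh t + Ij * Real.sinh rk * Real.sinh t)
      ri _ _ hg2 hh2 ha1 hc1 hQ2pos)
  have hsqQ : Real.sqrt (1 - (Real.cosh rk * Real.cosh ri + Ij * Real.sinh rk * Real.sinh ri) ^ 2 - (Real.cosh rj * Real.cosh rk + Ii * Real.sinh rj * Real.sinh rk) ^ 2 - (Real.cosh ri * Real.cosh rj + Ik * Real.sinh ri * Real.sinh rj) ^ 2 + 2 * (Real.cosh rk * Real.cosh ri + Ij * Real.sinh rk * Real.sinh ri) * (Real.cosh rj * Real.cosh rk + Ii * Real.sinh rj * Real.sinh rk) * (Real.cosh ri * Real.cosh rj + Ik * Real.sinh ri * Real.sinh rj)) = Real.sqrt (1 - (Real.cosh rj * Real.cosh rk + Ii * Real.sinh rj * Real.sinh rk) ^ 2 - (Real.cosh rk * Real.cosh ri + Ij * Real.sinh rk * Real.sinh ri) ^ 2 - (Real.cosh ri * Real.cosh rj + Ik * Real.sinh ri * Real.sinh rj) ^ 2 + 2 * (Real.cosh rj * Real.cosh rk + Ii * Real.sinh rj * Real.sinh rk) * (Real.cosh rk * Real.cosh ri + Ij * Real.sinh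 rk * Real.sinh ri) * (Real.cosh ri * Real.cosh rj + Ik * Real.sinh ri * Real.sinh rj)) := by
    rw [show (1 - (Real.cosh rk * Real.cosh ri + Ij * Real.sinh rk * Real.sinh ri) ^ 2 - (Real.cosh rj * Real.cosh rk + Ii * Real.sinh rj * Real.sinh rk) ^ 2 - (Real.cosh ri * Real.cosh rj + Ik * Real.sinh ri * Real.sinh rj) ^ 2 + 2 * (Real.cosh rk * Real.cosh ri + Ij * Real.sinh rk * Real.sinh ri) * (Real.cosh rj * Real.cosh rk + Ii * Real.sinh rj * Real.sinh rk) * (Real.cosh ri * Real.cosh rj + Ik * Real.sinh ri * Real.sinh rj)) = (1 - (Real.cosh rj * Real.cosh rk + Ii * Real.sinh rj * Real.sinh rk) ^ 2 - (Real.cosh rk * Real.cosh ri + Ij * Real.sinh rk * Real.sinh ri) ^ 2 - (Real.cosh ri * Real.cosh rj + Ik * Real.sinh ri * Real.sinh rj) ^ 2 + 2 * (Real.cosh rj * Real.cosh rk + Ii * Real.sinh rj * Real.sinh rk) * (Real.cosh rk * Real.cosh ri + Ij * Real.sinh rk * Real.sinh ri) * (Real.cosh ri * Real.cosh rj + Ik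 * Real.sinh ri * Real.sinh rj)) from by ring]
  rw [hsqQ] at hd2
  have hN : Real.sinh rj * (((Real.cosh rk * Real.cosh ri + Ij * Real.sinh rk * Real.sinh ri) * (Real.cosh ri * Real.sinh rj + Ik * Real.sinh ri * Real.cosh rj) - (Real.sinh rj * Real.cosh rk + Ii * Real.cosh rj * Real.sinh rk)) * ((Real.cosh ri * Real.cosh rj + Ik * Real.sinh ri * Real.sinh rj) ^ 2 - 1) - ((Real.cosh rk * Real.cosh ri + Ij * Real.sinh rk * Real.sinh ri) * (Real.cosh ri * Real.cosh rj + Ik * Real.sinh ri * Real.sinh rj) - (Real.cosh rj * Real.cosh rk + Ii * Real.sinh rj * Real.sinh rk)) * (Real.cosh ri * Real.cosh rj + Ik * Real.sinh ri * Real.sinh rj) * (Real.cosh ri * Real.sinh rj + Ik * Real.sinh ri * Real.cosh rj)) = Real.sinh ri * (((Real.cosh rj * Real.cosh rk + Ii * Real.sinh rj * Real.sinh rk) * (Real.sinh ri * Real.cosh rj + Ik * Real.cosh ri * Real.sinh rj) - (Real.cosh rk * Real.sinh ri + Ij * Real.sinh rk * Real.cosh ri)) * ((Real.cosh ri * Real.cosh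 rj + Ik * Real.sinh ri * Real.sinh rj) ^ 2 - 1) - ((Real.cosh rj * Real.cosh rk + Ii * Real.sinh rj * Real.sinh rk) * (Real.cosh ri * Real.cosh rj + Ik * Real.sinh ri * Real.sinh rj) - (Real.cosh rk * Real.cosh ri + Ij * Real.sinh rk * Real.sinh ri)) * (Real.cosh ri * Real.cosh rj + Ik * Real.sinh ri * Real.sinh rj) * (Real.sinh ri * Real.cosh rj + Ik * Real.cosh ri * Real.sinh rj)) := by
    linear_combination ((-1:ℝ) * (Real.sinh rj)^2 * (Real.cosh rk) + (1:ℝ) * (Real.cosh rj) * (Real.sinh rj)^3 * (Real.sinh rk) * (Ii) + (-1:ℝ) * (Real.cosh rj)^3 * (Real.sinh rj) * (Real.sinh rk) * (Ii) + (-1:ℝ) * (Real.sinh ri)^2 * (Real.sinh rj)^2 * (Real.cosh rk) * (Ik)^2 + (1:ℝ) * (Real.sinh ri)^2 * (Real.cosh rj) * (Real.sinh rj) * (Real.sinh rk) * (Ij) * (Ik) + (-1:ℝ) * (Real.cosh ri) * (Real.sinh ri) * (Real.cosh rj) * (Real.sinh rj) * (Real.cosh rk) * (Ik) + (1:ℝ)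 * (Real.cosh ri) * (Real.sinh ri) * (Real.cosh rj)^2 * (Real.sinh rk) * (Ij)) * hchi + ((-1:ℝ) * (Real.cosh rj) * (Real.sinh rj) * (Real.sinh rk) * (Ii) + (1:ℝ) * (Real.sinh ri)^2 * (Real.cosh rk) + (1:ℝ) * (Real.sinh ri)^2 * (Real.sinh rj)^2 * (Real.cosh rk) * (Ik)^2 + (-1:ℝ) * (Real.sinh ri)^2 * (Real.cosh rj) * (Real.sinh rj) * (Real.sinh rk) * (Ii) + (1:ℝ) * (Real.cosh ri) * (Real.sinh ri) * (Real.sinh rk) * (Ij) + (-1:ℝ) * (Real.cosh ri) * (Real.sinh ri) * (Real.sinh rj)^2 * (Real.sinh rk) * (Ii) * (Ik) + (1:ℝ) * (Real.cosh ri) * (Real.sinh ri) * (Real.cosh rj) * (Real.sinh rj) * (Real.cosh rk) * (Ik)) * hchj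
  have hE : Real.sinh rj * (((Real.cosh rk * Real.cosh ri + Ij * Real.sinh rk * Real.sinh ri) * (Real.cosh ri * Real.sinh rj + Ik * Real.sinh ri * Real.cosh rj) - (Real.sinh rj * Real.cosh rk + Ii * Real.cosh rj * Real.sinh rk)) * ((Real.cosh ri * Real.cosh rj + Ik * Real.sinh ri * Real.sinh rj) ^ 2 - 1) - ((Real.cosh rk * Real.cosh ri + Ij * Real.sinh rk * Real.sinh ri) * (Real.cosh ri * Real.cosh rj + Ik * Real.sinh ri * Real.sinh rj) - (Real.cosh rj * Real.cosh rk + Ii * Real.sinh rj * Real.sinh rk)) * (Real.cosh ri * Real.cosh rj + Ik * Real.sinh ri * Real.sinh rj) * (Real.cosh ri * Real.sinh rj + Ik * Real.sinh ri * Real.cosh rj)) = -(Real.sinh ri * Real.sinh rj * (Real.sinh ri * Real.sinh rj * Real.cosh rk * (1 - Ik ^ 2) + Real.sinh ri * Real.cosh rj * Real.sinh rk * (Ii + Ij * Ik) + Real.cosh ri * Real.sinh rj * Real.sinh rk * (Ij + Ik * Ii))) := by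
    linear_combination ((-1:ℝ) * (Real.sinh rj)^2 * (Real.cosh rk) + (1:ℝ) * (Real.cosh rj) * (Real.sinh rj)^3 * (Real.sinh rk) * (Ii) + (-1:ℝ) * (Real.cosh rj)^3 * (Real.sinh rj) * (Real.sinh rk) * (Ii)) * hchi + ((-1:ℝ) * (Real.cosh rj) * (Real.sinh rj) * (Real.sinh rk) * (Ii) + (1:ℝ) * (Real.sinh ri)^2 * (Real.sinh rj)^2 * (Real.cosh rk) * (Ik)^2 + (-1:ℝ) * (Real.sinh ri)^2 * (Real.cosh rj) * (Real.sinh rj) * (Real.sinh rk) * (Ii) + (-1:ℝ) * (Real.cosh ri) * (Real.sinh ri) * (Real.sinh rj)^2 * (Real.sinh rk) * (Ii) * (Ik) + (1:ℝ) * (Real.cosh ri) * (Real.sinh ri) * (Real.cosh rj) * (Real.sinh rj) * (Real.cosh rk) * (Ik)) * hchj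
  have hc2 : (0:ℝ) < (Real.cosh ri * Real.cosh rj + Ik * Real.sinh ri * Real.sinh rj) ^ 2 - 1 := sub_pos.mpr (one_lt_pow₀ hc1 two_ne_zero)
  have e1 : Real.sinh rj * -((((Real.cosh rk * Real.cosh ri + Ij * Real.sinh rk * Real.sinh ri) * (Real.cosh ri * Real.sinh rj + Ik * Real.sinh ri * Real.cosh rj) - (Real.sinh rj * Real.cosh rk + Ii * Real.cosh rj * Real.sinh rk)) * ((Real.cosh ri * Real.cosh rj + Ik * Real.sinh ri * Real.sinh rj) ^ 2 - 1) - ((Real.cosh rk * Real.cosh ri + Ij * Real.sinh rk * Real.sinh ri) * (Real.cosh ri * Real.cosh rj + Ik * Real.sinh ri * Real.sinh rj) - (Real.cosh rj * Real.cosh rk + Ii * Real.sinh rj * Real.sinh rk)) * (Real.cosh ri * Real.cosh rj + Ik * Real.sinh ri * Real.sinh rj) * (Real.cosh ri * Real.sinh rj + Ik * Real.sinh ri * Real.cosh rj)) / (((Real.cosh ri * Real.cosh rj + Ik * Real.sinh ri * Real.sinh rj) ^ 2 - 1) * Real.sqrt (1 - (Real.cosh rj * Real.cosh rk + Ii * Real.sinh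 rj * Real.sinh rk) ^ 2 - (Real.cosh rk * Real.cosh ri + Ij * Real.sinh rk * Real.sinh ri) ^ 2 - (Real.cosh ri * Real.cosh rj + Ik * Real.sinh ri * Real.sinh rj) ^ 2 + 2 * (Real.cosh rj * Real.cosh rk + Ii * Real.sinh rj * Real.sinh rk) * (Real.cosh rk * Real.cosh ri + Ij * Real.sinh rk * Real.sinh ri) * (Real.cosh ri * Real.cosh rj + Ik * Real.sinh ri * Real.sinh rj))))
      = -((Real.sinh rj * (((Real.cosh rk * Real.cosh ri + Ij * Real.sinh rk * Real.sinh ri) * (Real.cosh ri * Real.sinh rj + Ik * Real.sinh ri * Real.cosh rj) - (Real.sinh rj * Real.cosh rk + Ii * Real.cosh rj * Real.sinh rk)) * ((Real.cosh ri * Real.cosh rj + Ik * Real.sinh ri * Real.sinh rj) ^ 2 - 1) - ((Real.cosh rk * Real.cosh ri + Ij * Real.sinh rk * Real.sinh ri) * (Real.cosh ri * Real.cosh rj + Ik * Real.sinh ri * Real.sinh rj) - (Real.cosh rj * Real.cosh rk + Ii * Real.sinh rj * Real.sinh rk)) * (Real.cosh ri * Real.cosh rj + Ik * Real.sinh ri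 * Real.sinh rj) * (Real.cosh ri * Real.sinh rj + Ik * Real.sinh ri * Real.cosh rj))) / (((Real.cosh ri * Real.cosh rj + Ik * Real.sinh ri * Real.sinh rj) ^ 2 - 1) * Real.sqrt (1 - (Real.cosh rj * Real.cosh rk + Ii * Real.sinh rj * Real.sinh rk) ^ 2 - (Real.cosh rk * Real.cosh ri + Ij * Real.sinh rk * Real.sinh ri) ^ 2 - (Real.cosh ri * Real.cosh rj + Ik * Real.sinh ri * Real.sinh rj) ^ 2 + 2 * (Real.cosh rj * Real.cosh rk + Ii * Real.sinh rj * Real.sinh rk) * (Real.cosh rk * Real.cosh ri + Ij * Real.sinh rk * Real.sinh ri) * (Real.cosh ri * Real.cosh rj + Ik * Real.sinh ri * Real.sinh rj)))) := by ring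
  have e2 : Real.sinh ri * -((((Real.cosh rj * Real.cosh rk + Ii * Real.sinh rj * Real.sinh rk) * (Real.sinh ri * Real.cosh rj + Ik * Real.cosh ri * Real.sinh rj) - (Real.cosh rk * Real.sinh ri + Ij * Real.sinh rk * Real.cosh ri)) * ((Real.cosh ri * Real.cosh rj + Ik * Real.sinh ri * Real.sinh rj) ^ 2 - 1) - ((Real.cosh rj * Real.cosh rk + Ii * Real.sinh rj * Real.sinh rk) * (Real.cosh ri * Real.cosh rj + Ik * Real.sinh ri * Real.sinh rj) - (Real.cosh rk * Real.cosh ri + Ij * Real.sinh rk * Real.sinh ri)) * (Real.cosh ri * Real.cosh rj + Ik * Real.sinh ri * Real.sinh rj) * (Real.sinh ri * Real.cosh rj + Ik * Real.cosh ri * Real.sinh rj)) / (((Real.cosh ri * Real.cosh rj + Ik * Real.sinh ri * Real.sinh rj) ^ 2 - 1) * Real.sqrt (1 - (Real.cosh rj * Real.cosh rk + Ii * Real.sinh rj * Real.sinh rk) ^ 2 - (Real.cosh rk * Real.cosh ri + Ij * Real.sinh rk * Real.sinh ri) ^ 2 - (Real.cosh ri * Real.cosh rj + Ik * Real.sinh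 ri * Real.sinh rj) ^ 2 + 2 * (Real.cosh rj * Real.cosh rk + Ii * Real.sinh rj * Real.sinh rk) * (Real.cosh rk * Real.cosh ri + Ij * Real.sinh rk * Real.sinh ri) * (Real.cosh ri * Real.cosh rj + Ik * Real.sinh ri * Real.sinh rj))))
      = -((Real.sinh ri * (((Real.cosh rj * Real.cosh rk + Ii * Real.sinh rj * Real.sinh rk) * (Real.sinh ri * Real.cosh rj + Ik * Real.cosh ri * Real.sinh rj) - (Real.cosh rk * Real.sinh ri + Ij * Real.sinh rk * Real.cosh ri)) * ((Real.cosh ri * Real.cosh rj + Ik * Real.sinh ri * Real.sinh rj) ^ 2 - 1) - ((Real.cosh rj * Real.cosh rk + Ii * Real.sinh rj * Real.sinh rk) * (Real.cosh ri * Real.cosh rj + Ik * Real.sinh ri * Real.sinh rj) - (Real.cosh rk * Real.cosh ri + Ij * Real.sinh rk * Real.sinh ri)) * (Real.cosh ri * Real.cosh rj + Ik * Real.sinh ri * Real.sinh rj) * (Real.sinh ri * Real.cosh rj + Ik * Real.cosh ri * Real.sinh rj))) / (((Real.cosh ri * Real.cosh rj + Ik * Real.sinh ri * Real.sinh rj)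 ^ 2 - 1) * Real.sqrt (1 - (Real.cosh rj * Real.cosh rk + Ii * Real.sinh rj * Real.sinh rk) ^ 2 - (Real.cosh rk * Real.cosh ri + Ij * Real.sinh rk * Real.sinh ri) ^ 2 - (Real.cosh ri * Real.cosh rj + Ik * Real.sinh ri * Real.sinh rj) ^ 2 + 2 * (Real.cosh rj * Real.cosh rk + Ii * Real.sinh rj * Real.sinh rk) * (Real.cosh rk * Real.cosh ri + Ij * Real.sinh rk * Real.sinh ri) * (Real.cosh ri * Real.cosh rj + Ik * Real.sinh ri * Real.sinh rj)))) := by ring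
  constructor
  · rw [hd1, hd2, e1, e2, hN]
  · rw [hd1, e1, hE, neg_div, neg_neg]
    apply div_nonneg
    · apply mul_nonneg (mul_pos hSi hSj).le
      have u1 : 0 ≤ Real.sinh ri * Real.sinh rj * Real.cosh rk * (1 - Ik ^ 2) :=
        mul_nonneg (mul_pos (mul_pos hSi hSj) hCk).le h1k
      have u2 : 0 ≤ Real.sinh ri * Real.cosh rj * Real.sinh rk * (Ii + Ij * Ik) :=
        mul_nonneg (mul_pos (mul_pos hSi hCj) hSk).le hXi
      have u3 : 0 ≤ Real.cosh ri * Real.sinh rj * Real.sinh rk * (Ij + Ik * Ii) :=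
        mul_nonneg (mul_pos (mul_pos hCi hSj) hSk).le hXj
      linarith only [u1, u2, u3]
    · exact mul_nonneg hc2.le (Real.sqrt_nonneg _)


theorem stmt_7 (Θi Θj Θk : ℝ)
    (hi0 : 0 ≤ Θi) (hi1 : Θi < Real.pi)
    (hj0 : 0 ≤ Θj) (hj1 : Θj < Real.pi)
    (hk0 : 0 ≤ Θk) (hk1 : Θk < Real.pi)
    (hξi : 0 ≤ Real.cos Θi + Real.cos Θj * Real.cos Θk)
    (hξj : 0 ≤ Real.cos Θj + Real.cos Θk * Real.cos Θi)
    (hξk : 0 ≤ Real.cos Θk + Real.cos Θi * Real.cos Θj)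
    (ri rj rk : ℝ) (hri : 0 < ri) (hrj : 0 < rj) (hrk : 0 < rk) :
    Real.sinh rj *
        deriv (fun t => hypAngle (Real.cos Θi) (Real.cos Θj) (Real.cos Θk) ri t rk) rj
      = Real.sinh ri *
        deriv (fun t => hypAngle (Real.cos Θj) (Real.cos Θk) (Real.cos Θi) rj rk t) ri ∧
    0 ≤ Real.sinh rj *
        deriv (fun t => hypAngle (Real.cos Θi) (Real.cos Θj) (Real.cos Θk) ri t rk) rj := by
  have hni : -1 < Real.cos Θi := by
    have h := Real.cos_lt_cos_of_nonneg_of_le_pi hi0 le_rfl hi1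
    rwa [Real.cos_pi] at h
  have hnj : -1 < Real.cos Θj := by
    have h := Real.cos_lt_cos_of_nonneg_of_le_pi hj0 le_rfl hj1
    rwa [Real.cos_pi] at h
  have hnk : -1 < Real.cos Θk := by
    have h := Real.cos_lt_cos_of_nonneg_of_le_pi hk0 le_rfl hk1
    rwa [Real.cos_pi] at h
  exact mainLemma (Real.cos Θi) (Real.cos Θj) (Real.cos Θk) hni (Real.cos_le_one Θi)
    hnj (Real.cos_le_one Θj) hnk (Real.cos_le_one Θk) hξi hξj hξk ri rj rk hri hrj hrk
end

section
/- Assume ξ_i ≥ 0, ξ_j ≥ 0, ξ_k ≥ 0. For all positive reals r_i, r_j, r_k, the hyperbolic inner angles satisfy 0 < ϑ_i < π − Θ_i, 0 < ϑ_j < π − Θ_j, 0 < ϑ_k < π − Θ_k, and ϑ_i + ϑ_j + ϑ_k < π. -/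
open Real

lemma hypCosh_comm (I x y : ℝ) : hypCosh I x y = hypCosh I y x := by
  unfold hypCosh; ring

lemma one_lt_hypCosh {I x y : ℝ} (hI : -1 < I) (hx : 0 < x) (hy : 0 < y) :
    1 < hypCosh I x y := by
  have hs := Real.sinh_pos_iff.mpr hx
  have hs' := Real.sinh_pos_iff.mpr hy
  have h1 := Real.one_le_cosh (x - y)
  rw [Real.cosh_sub] at h1
  unfold hypCosh
  nlinarith [mul_pos hs hs']

lemma hypCosh_sq_sub_one (I x y : ℝ) :
    hypCosh I x y ^ 2 - 1 =
      (Real.cosh x * Real.sinh y + I * Real.sinh x * Real.cosh y) ^ 2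
        + (1 - I ^ 2) * Real.sinh x ^ 2 := by
  unfold hypCosh
  have h1 := Real.cosh_sq x
  have h2 := Real.cosh_sq y
  linear_combination (Real.cosh x ^ 2 - I ^ 2 * Real.sinh x ^ 2) * h2 + h1

lemma abs_le_sqrt_hypCosh {I x y : ℝ} (hI2 : I ^ 2 ≤ 1) :
    |Real.cosh x * Real.sinh y + I * Real.sinh x * Real.cosh y| ≤
      Real.sqrt (hypCosh I x y ^ 2 - 1) := by
  rw [← Real.sqrt_sq_eq_abs]
  apply Real.sqrt_le_sqrt
  rw [hypCosh_sq_sub_one]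
  nlinarith [sq_nonneg (Real.sinh x)]

lemma abs_lt_sqrt_hypCosh {I x y : ℝ} (hI2 : I ^ 2 < 1) (hx : 0 < x) :
    |Real.cosh x * Real.sinh y + I * Real.sinh x * Real.cosh y| <
      Real.sqrt (hypCosh I x y ^ 2 - 1) := by
  rw [← Real.sqrt_sq_eq_abs]
  apply Real.sqrt_lt_sqrt (sq_nonneg _)
  rw [hypCosh_sq_sub_one]
  have hs := Real.sinh_pos_iff.mpr hx
  nlinarith [mul_pos (show (0:ℝ) < 1 - I ^ 2 by linarith) (pow_pos hs 2)]

lemma sqrt_hypCosh_le {I x y : ℝ} (hI1 : I ≤ 1) (hI : -1 < I) (hx : 0 < x) (hy : 0 < y) :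
    Real.sqrt (hypCosh I x y ^ 2 - 1) ≤
      Real.sinh x * Real.cosh y + Real.cosh x * Real.sinh y := by
  have hsx := (Real.sinh_pos_iff.mpr hx).le
  have hsy := (Real.sinh_pos_iff.mpr hy).le
  have hcx := (Real.cosh_pos (x := x)).le
  have hcy := (Real.cosh_pos (x := y)).le
  rw [show Real.sinh x * Real.cosh y + Real.cosh x * Real.sinh y
      = Real.sqrt ((Real.sinh x * Real.cosh y + Real.cosh x * Real.sinh y) ^ 2) from
      (Real.sqrt_sq (by positivity)).symm]
  apply Real.sqrt_le_sqrt
  have key : (Real.sinh x * Real.cosh y + Real.cosh x * Real.sinh y) ^ 2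
      - (hypCosh I x y ^ 2 - 1)
      = (1 - I) * (Real.sinh x * Real.sinh y)
        * ((1 + I) * (Real.sinh x * Real.sinh y) + 2 * (Real.cosh x * Real.cosh y)) := by
    unfold hypCosh
    have h1 := Real.cosh_sq x
    have h2 := Real.cosh_sq y
    linear_combination (Real.sinh y ^ 2 - Real.cosh y ^ 2) * h1 - h2
  nlinarith [mul_nonneg (mul_nonneg (by linarith : (0:ℝ) ≤ 1 - I)
      (mul_nonneg hsx hsy))
      (by nlinarith [mul_pos (Real.cosh_pos (x := x)) (Real.cosh_pos (x := y)),
        mul_nonneg hsx hsy] : (0:ℝ) ≤ (1 + I) * (Real.sinh x * Real.sinh y)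
          + 2 * (Real.cosh x * Real.cosh y))]

lemma tri_lt {Ii Ij Ik x y z : ℝ}
    (hIi : -1 < Ii) (hIj : -1 < Ij) (hIj1 : Ij ≤ 1) (hIk : -1 < Ik) (hIk1 : Ik ≤ 1)
    (hξi : 0 ≤ Ii + Ij * Ik) (hx : 0 < x) (hy : 0 < y) (hz : 0 < z) :
    hypCosh Ij z x * hypCosh Ik x y <
      hypCosh Ii y z +
        Real.sqrt (hypCosh Ij z x ^ 2 - 1) * Real.sqrt (hypCosh Ik x y ^ 2 - 1) := by
  set b' := Real.sqrt (hypCosh Ij z x ^ 2 - 1) with hb'def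
  set c' := Real.sqrt (hypCosh Ik x y ^ 2 - 1) with hc'def
  set u := Real.cosh z * Real.sinh x + Ij * Real.sinh z * Real.cosh x with hu
  set v := Real.cosh y * Real.sinh x + Ik * Real.sinh y * Real.cosh x with hv
  have hub : |u| ≤ b' := abs_le_sqrt_hypCosh (by nlinarith)
  have hvb : |v| ≤ c' := by
    rw [hc'def, hypCosh_comm Ik x y]
    exact abs_le_sqrt_hypCosh (by nlinarith)
  have hc'pos : 0 < c' := by
    rw [hc'def]
    have := one_lt_hypCosh hIk hx hy
    exact Real.sqrt_pos.mpr (by nlinarith)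
  have hb'pos : 0 < b' := by
    rw [hb'def]
    have := one_lt_hypCosh hIj hz hx
    exact Real.sqrt_pos.mpr (by nlinarith)
  have key : hypCosh Ii y z - hypCosh Ij z x * hypCosh Ik x y + u * v
      = (Ii + Ij * Ik) * (Real.sinh y * Real.sinh z) := by
    unfold hypCosh
    rw [hu, hv]
    linear_combination (Ij * Ik * (Real.sinh y * Real.sinh z)
      - Real.cosh y * Real.cosh z) * Real.cosh_sq x
  have huv : u * v ≤ b' * c' := by
    calc u * v ≤ |u * v| := le_abs_self _
    _ = |u| * |v| := abs_mul _ _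
    _ ≤ b' * c' := mul_le_mul hub hvb (abs_nonneg _) (by linarith)
  have hsyz : 0 < Real.sinh y * Real.sinh z :=
    mul_pos (Real.sinh_pos_iff.mpr hy) (Real.sinh_pos_iff.mpr hz)
  rcases lt_or_eq_of_le hξi with hpos | heq
  · nlinarith
  · -- ξi = 0; then Ij < 1 or Ik < 1
    have hcases : Ij ^ 2 < 1 ∨ Ik ^ 2 < 1 := by
      by_contra hcon
      push_neg at hcon
      obtain ⟨h1, h2⟩ := hcon
      have e1 : Ij = 1 := by
        clear key huv hub hvb hc'pos hb'pos heq hsyz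
        nlinarith
      have e2 : Ik = 1 := by
        clear key huv hub hvb hc'pos hb'pos heq hsyz e1
        nlinarith
      rw [e1, e2] at heq
      linarith
    have huv' : u * v < b' * c' := by
      rcases hcases with hj2 | hk2
      · have hub' : |u| < b' := abs_lt_sqrt_hypCosh hj2 hz
        calc u * v ≤ |u| * |v| := by rw [← abs_mul]; exact le_abs_self _
        _ ≤ |u| * c' := mul_le_mul_of_nonneg_left hvb (abs_nonneg _)
        _ < b' * c' := mul_lt_mul_of_pos_right hub' hc'pos
      · have hvb' : |v| < c' := by
          rw [hc'def, hypCosh_comm Ik x y]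
          exact abs_lt_sqrt_hypCosh hk2 hy
        calc u * v ≤ |u| * |v| := by rw [← abs_mul]; exact le_abs_self _
        _ ≤ b' * |v| := mul_le_mul_of_nonneg_right hub (abs_nonneg _)
        _ < b' * c' := mul_lt_mul_of_pos_left hvb' hb'pos
    nlinarith

lemma one_add_triple_pos {Ii Ij Ik : ℝ} (hIi : -1 < Ii) (hIi1 : Ii ≤ 1)
    (hIj : -1 < Ij) (hIj1 : Ij ≤ 1) (hIk : -1 < Ik) (hIk1 : Ik ≤ 1) :
    0 < 1 + Ii * Ij * Ik := by
  have h1 : -1 < Ij * Ik := by nlinarith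
  have h2 : Ij * Ik ≤ 1 := by nlinarith
  nlinarith

lemma neg_case_bounds {Ii Ij Ik : ℝ} (hIi : -1 < Ii) (hIi1 : Ii ≤ 1)
    (hIj : -1 < Ij) (hIj1 : Ij ≤ 1) (hIk : -1 < Ik) (hIk1 : Ik ≤ 1)
    (hξi : 0 ≤ Ii + Ij * Ik) (hξj : 0 ≤ Ij + Ik * Ii)
    (hIneg : Ii < 0) : -Ii ≤ Ij ∧ -Ii ≤ Ik := by
  have hjk : 0 < Ij * Ik := by linarith
  have hIjpos : 0 < Ij := by
    by_contra hcon
    push_neg at hcon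
    have hIjlt : Ij < 0 := lt_of_le_of_ne hcon (by rintro rfl; simp at hjk)
    have hIklt : Ik < 0 := by nlinarith
    -- a := -Ii, b := -Ij, c := -Ik ∈ (0,1), b*c ≥ a, c*a ≥ b ⇒ b ≤ b*c^2 ⇒ c^2 ≥ 1, contra
    have h1 : -Ii ≤ Ij * Ik := by linarith
    have h2 : -Ij ≤ Ik * Ii := by linarith
    nlinarith [mul_le_mul_of_nonneg_right h1 (by linarith : (0:ℝ) ≤ -Ik),
      mul_pos (show (0:ℝ) < -Ij by linarith) (show (0:ℝ) < 1 - Ik ^ 2 by nlinarith)]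
  have hIkpos : 0 < Ik := by nlinarith
  constructor
  · nlinarith
  · nlinarith

lemma angle_bound_key {Ii Ij Ik x y z : ℝ}
    (hIi : -1 < Ii) (hIi1 : Ii ≤ 1) (hIj : -1 < Ij) (hIj1 : Ij ≤ 1)
    (hIk : -1 < Ik) (hIk1 : Ik ≤ 1)
    (hξi : 0 ≤ Ii + Ij * Ik) (hξj : 0 ≤ Ij + Ik * Ii) (hξk : 0 ≤ Ik + Ii * Ij)
    (hx : 0 < x) (hy : 0 < y) (hz : 0 < z) :
    0 < hypCosh Ij z x * hypCosh Ik x y - hypCosh Ii y z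
        + Ii * (Real.sqrt (hypCosh Ij z x ^ 2 - 1) * Real.sqrt (hypCosh Ik x y ^ 2 - 1)) := by
  set b' := Real.sqrt (hypCosh Ij z x ^ 2 - 1) with hb'def
  set c' := Real.sqrt (hypCosh Ik x y ^ 2 - 1) with hc'def
  have hc'pos : 0 < c' := by
    rw [hc'def]
    have := one_lt_hypCosh hIk hx hy
    exact Real.sqrt_pos.mpr (by nlinarith)
  have hb'pos : 0 < b' := by
    rw [hb'def]
    have := one_lt_hypCosh hIj hz hx
    exact Real.sqrt_pos.mpr (by nlinarith)
  have hsx := Real.sinh_pos_iff.mpr hx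
  have hsy := Real.sinh_pos_iff.mpr hy
  have hsz := Real.sinh_pos_iff.mpr hz
  have hcx := Real.cosh_pos (x := x)
  have hcy := Real.cosh_pos (x := y)
  have hcz := Real.cosh_pos (x := z)
  rcases le_or_gt 0 Ii with hIpos | hIneg
  · -- use lower bounds on b', c'
    set u := Real.cosh x * Real.sinh z + Ij * Real.sinh x * Real.cosh z with hu
    set v := Real.cosh x * Real.sinh y + Ik * Real.sinh x * Real.cosh y with hv
    have hub : |u| ≤ b' := by
      rw [hb'def, hypCosh_comm Ij z x]
      exact abs_le_sqrt_hypCosh (by nlinarith)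
    have hvb : |v| ≤ c' := abs_le_sqrt_hypCosh (by nlinarith)
    have huv : u * v ≤ b' * c' := by
      calc u * v ≤ |u * v| := le_abs_self _
      _ = |u| * |v| := abs_mul _ _
      _ ≤ b' * c' := mul_le_mul hub hvb (abs_nonneg _) (by linarith)
    have hmul : Ii * (u * v) ≤ Ii * (b' * c') := mul_le_mul_of_nonneg_left huv hIpos
    have key : hypCosh Ij z x * hypCosh Ik x y - hypCosh Ii y z + Ii * (u * v)
        = (1 + Ii * Ij * Ik) * (Real.sinh x ^ 2 * (Real.cosh y * Real.cosh z))
          + (Ik + Ii * Ij) * (Real.cosh x * Real.cosh z * Real.sinh x * Real.sinh y)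
          + (Ij + Ii * Ik) * (Real.cosh x * Real.cosh y * Real.sinh x * Real.sinh z)
          + (Ii + Ij * Ik) * (Real.sinh x ^ 2 * (Real.sinh y * Real.sinh z)) := by
      unfold hypCosh
      rw [hu, hv]
      linear_combination (Real.cosh y * Real.cosh z + Ii * Real.sinh y * Real.sinh z)
        * Real.cosh_sq x
    have htriple := one_add_triple_pos hIi hIi1 hIj hIj1 hIk hIk1
    have p1 : 0 < (1 + Ii * Ij * Ik) * (Real.sinh x ^ 2 * (Real.cosh y * Real.cosh z)) :=
      mul_pos htriple (by positivity)
    have p2 : 0 ≤ (Ik + Ii * Ij) * (Real.cosh x * Real.cosh z * Real.sinh x * Real.sinh y) :=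
      mul_nonneg (by linarith [hξk]) (by positivity)
    have p3 : 0 ≤ (Ij + Ii * Ik) * (Real.cosh x * Real.cosh y * Real.sinh x * Real.sinh z) :=
      mul_nonneg (by linarith [hξj]) (by positivity)
    have p4 : 0 ≤ (Ii + Ij * Ik) * (Real.sinh x ^ 2 * (Real.sinh y * Real.sinh z)) :=
      mul_nonneg hξi (by positivity)
    linarith [key, hmul, p1, p2, p3, p4]
  · -- Ii < 0 : use upper bounds on b', c'
    obtain ⟨hIjge, hIkge⟩ := neg_case_bounds hIi hIi1 hIj hIj1 hIk hIk1 hξi hξj hIneg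
    set U := Real.sinh z * Real.cosh x + Real.cosh z * Real.sinh x with hU
    set V := Real.sinh x * Real.cosh y + Real.cosh x * Real.sinh y with hV
    have hbU : b' ≤ U := by
      rw [hb'def]
      exact sqrt_hypCosh_le hIj1 hIj hz hx
    have hcV : c' ≤ V := by
      rw [hc'def]
      exact sqrt_hypCosh_le hIk1 hIk hx hy
    have hUV : b' * c' ≤ U * V :=
      mul_le_mul hbU hcV hc'pos.le (by positivity)
    have hmul : Ii * (U * V) ≤ Ii * (b' * c') := mul_le_mul_of_nonpos_left hUV hIneg.le
    have key : hypCosh Ij z x * hypCosh Ik x y - hypCosh Ii y z + Ii * (U * V)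
        = (1 + Ii) * (Real.sinh x ^ 2 * (Real.cosh y * Real.cosh z))
          + (Ik + Ii) * (Real.cosh x * Real.cosh z * Real.sinh x * Real.sinh y)
          + (Ij + Ii) * (Real.cosh x * Real.cosh y * Real.sinh x * Real.sinh z)
          + (Ii + Ij * Ik) * (Real.sinh x ^ 2 * (Real.sinh y * Real.sinh z)) := by
      unfold hypCosh
      rw [hU, hV]
      linear_combination (Real.cosh y * Real.cosh z + Ii * Real.sinh y * Real.sinh z)
        * Real.cosh_sq x
    have p1 : 0 < (1 + Ii) * (Real.sinh x ^ 2 * (Real.cosh y * Real.cosh z)) :=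
      mul_pos (by linarith) (by positivity)
    have p2 : 0 ≤ (Ik + Ii) * (Real.cosh x * Real.cosh z * Real.sinh x * Real.sinh y) :=
      mul_nonneg (by linarith) (by positivity)
    have p3 : 0 ≤ (Ij + Ii) * (Real.cosh x * Real.cosh y * Real.sinh x * Real.sinh z) :=
      mul_nonneg (by linarith) (by positivity)
    have p4 : 0 ≤ (Ii + Ij * Ik) * (Real.sinh x ^ 2 * (Real.sinh y * Real.sinh z)) :=
      mul_nonneg hξi (by positivity)
    linarith [key, hmul, p1, p2, p3, p4]


lemma corner {Ii Ij Ik x y z : ℝ}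
    (hIi : -1 < Ii) (hIi1 : Ii ≤ 1) (hIj : -1 < Ij) (hIj1 : Ij ≤ 1)
    (hIk : -1 < Ik) (hIk1 : Ik ≤ 1)
    (hξi : 0 ≤ Ii + Ij * Ik) (hξj : 0 ≤ Ij + Ik * Ii) (hξk : 0 ≤ Ik + Ii * Ij)
    (hx : 0 < x) (hy : 0 < y) (hz : 0 < z) :
    0 < hypAngle Ii Ij Ik x y z ∧ hypAngle Ii Ij Ik x y z ≤ Real.pi ∧
      -Ii < Real.cos (hypAngle Ii Ij Ik x y z) := by
  have hA : 1 < hypCosh Ii y z := one_lt_hypCosh hIi hy hz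
  have hB : 1 < hypCosh Ij z x := one_lt_hypCosh hIj hz hx
  have hC : 1 < hypCosh Ik x y := one_lt_hypCosh hIk hx hy
  have hTi := tri_lt hIi hIj hIj1 hIk hIk1 hξi hx hy hz
  have hWi := angle_bound_key hIi hIi1 hIj hIj1 hIk hIk1 hξi hξj hξk hx hy hz
  have hθi : hypAngle Ii Ij Ik x y z
      = Real.arccos ((hypCosh Ij z x * hypCosh Ik x y - hypCosh Ii y z) /
        (Real.sqrt (hypCosh Ij z x ^ 2 - 1) * Real.sqrt (hypCosh Ik x y ^ 2 - 1))) := rfl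
  set A := hypCosh Ii y z
  set B := hypCosh Ij z x
  set C := hypCosh Ik x y
  set b' := Real.sqrt (B ^ 2 - 1) with hb'def
  set c' := Real.sqrt (C ^ 2 - 1) with hc'def
  have hb' : 0 < b' := Real.sqrt_pos.mpr (by nlinarith)
  have hc' : 0 < c' := Real.sqrt_pos.mpr (by nlinarith)
  have hbc' : 0 < b' * c' := mul_pos hb' hc'
  set tA := (B * C - A) / (b' * c') with htAdef
  have htA1 : tA < 1 := (div_lt_one hbc').mpr (by linarith)
  have haux : Ii * (b' * c') ≤ b' * c' := by
    nlinarith [mul_le_mul_of_nonneg_right hIi1 hbc'.le]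
  have htAm : -Ii < tA := by
    rw [htAdef, lt_div_iff₀ hbc']
    nlinarith [hWi]
  have htAm1 : -1 < tA := by
    rw [htAdef, lt_div_iff₀ hbc']
    nlinarith [hWi, haux]
  refine ⟨?_, ?_, ?_⟩
  · rw [hθi]; exact Real.arccos_pos.mpr htA1
  · rw [hθi]; exact Real.arccos_le_pi _
  · rw [hθi, Real.cos_arccos (by linarith) (by linarith)]
    exact htAm

lemma sq_sub_one_pos {A : ℝ} (hA : 1 < A) : 0 < A ^ 2 - 1 := by nlinarith

lemma Nw_pos {N w I : ℝ} (hw : 0 < w) (hI1 : I ≤ 1) (hW : 0 < N + I * w) :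
    0 < N + w := by nlinarith [mul_le_mul_of_nonneg_right hI1 hw.le]

lemma one_sub_sq_nonneg {t : ℝ} (h1 : -1 < t) (h2 : t < 1) : 0 ≤ 1 - t ^ 2 := by nlinarith

lemma lt_of_sq_lt_sq'' {S X : ℝ} (hS : 0 ≤ S) (hX : 0 < X) (h : S ^ 2 < X ^ 2) : S < X := by
  nlinarith

lemma DD_lt_sq {A D : ℝ} (hA : 1 < A) (hD : 0 < D) : D * D < (A * D) ^ 2 := by
  nlinarith [mul_pos (mul_pos hD hD) (sq_sub_one_pos hA)]

set_option maxHeartbeats 1000000 in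
lemma sum_lt {Ii Ij Ik x y z : ℝ}
    (hIi : -1 < Ii) (hIi1 : Ii ≤ 1) (hIj : -1 < Ij) (hIj1 : Ij ≤ 1)
    (hIk : -1 < Ik) (hIk1 : Ik ≤ 1)
    (hξi : 0 ≤ Ii + Ij * Ik) (hξj : 0 ≤ Ij + Ik * Ii) (hξk : 0 ≤ Ik + Ii * Ij)
    (hx : 0 < x) (hy : 0 < y) (hz : 0 < z) :
    hypAngle Ii Ij Ik x y z + hypAngle Ij Ik Ii y z x + hypAngle Ik Ii Ij z x y
      < Real.pi := by
  have hA : 1 < hypCosh Ii y z := one_lt_hypCosh hIi hy hz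
  have hB : 1 < hypCosh Ij z x := one_lt_hypCosh hIj hz hx
  have hC : 1 < hypCosh Ik x y := one_lt_hypCosh hIk hx hy
  have hTi := tri_lt hIi hIj hIj1 hIk hIk1 hξi hx hy hz
  have hTj := tri_lt hIj hIk hIk1 hIi hIi1 hξj hy hz hx
  have hTk := tri_lt hIk hIi hIi1 hIj hIj1 hξk hz hx hy
  have hWi := angle_bound_key hIi hIi1 hIj hIj1 hIk hIk1 hξi hξj hξk hx hy hz
  have hWj := angle_bound_key hIj hIj1 hIk hIk1 hIi hIi1 hξj hξk hξi hy hz hx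
  have hWk := angle_bound_key hIk hIk1 hIi hIi1 hIj hIj1 hξk hξi hξj hz hx hy
  have hθi : hypAngle Ii Ij Ik x y z
      = Real.arccos ((hypCosh Ij z x * hypCosh Ik x y - hypCosh Ii y z) /
        (Real.sqrt (hypCosh Ij z x ^ 2 - 1) * Real.sqrt (hypCosh Ik x y ^ 2 - 1))) := rfl
  have hθj : hypAngle Ij Ik Ii y z x
      = Real.arccos ((hypCosh Ik x y * hypCosh Ii y z - hypCosh Ij z x) /
        (Real.sqrt (hypCosh Ik x y ^ 2 - 1) * Real.sqrt (hypCosh Ii y z ^ 2 - 1))) := rfl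
  have hθk : hypAngle Ik Ii Ij z x y
      = Real.arccos ((hypCosh Ii y z * hypCosh Ij z x - hypCosh Ik x y) /
        (Real.sqrt (hypCosh Ii y z ^ 2 - 1) * Real.sqrt (hypCosh Ij z x ^ 2 - 1))) := rfl
  clear hξi hξj hξk hx hy hz
  set A := hypCosh Ii y z
  set B := hypCosh Ij z x
  set C := hypCosh Ik x y
  set a' := Real.sqrt (A ^ 2 - 1) with ha'def
  set b' := Real.sqrt (B ^ 2 - 1) with hb'def
  set c' := Real.sqrt (C ^ 2 - 1) with hc'def
  have ha' : 0 < a' := Real.sqrt_pos.mpr (sq_sub_one_pos hA)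
  have hb' : 0 < b' := Real.sqrt_pos.mpr (sq_sub_one_pos hB)
  have hc' : 0 < c' := Real.sqrt_pos.mpr (sq_sub_one_pos hC)
  have ha'2 : a' ^ 2 = A ^ 2 - 1 := Real.sq_sqrt (sq_sub_one_pos hA).le
  have hb'2 : b' ^ 2 = B ^ 2 - 1 := Real.sq_sqrt (sq_sub_one_pos hB).le
  have hc'2 : c' ^ 2 = C ^ 2 - 1 := Real.sq_sqrt (sq_sub_one_pos hC).le
  set tA := (B * C - A) / (b' * c') with htAdef
  set tB := (C * A - B) / (c' * a') with htBdef
  set tC := (A * B - C) / (a' * b') with htCdef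
  have hbc' : 0 < b' * c' := mul_pos hb' hc'
  have hca' : 0 < c' * a' := mul_pos hc' ha'
  have hab' : 0 < a' * b' := mul_pos ha' hb'
  have htA1 : tA < 1 := (div_lt_one hbc').mpr (by linarith)
  have htB1 : tB < 1 := (div_lt_one hca').mpr (by linarith)
  have htC1 : tC < 1 := (div_lt_one hab').mpr (by linarith)
  have hNwA := Nw_pos hbc' hIi1 hWi
  have hNwB := Nw_pos hca' hIj1 hWj
  have hNwC := Nw_pos hab' hIk1 hWk
  have htAm : -1 < tA := by
    rw [htAdef, lt_div_iff₀ hbc']; linarith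
  have htBm : -1 < tB := by
    rw [htBdef, lt_div_iff₀ hca']; linarith
  have htCm : -1 < tC := by
    rw [htCdef, lt_div_iff₀ hab']; linarith
  set θi := hypAngle Ii Ij Ik x y z
  set θj := hypAngle Ij Ik Ii y z x
  set θk := hypAngle Ik Ii Ij z x y
  have hcosi : Real.cos θi = tA := by
    rw [hθi]; exact Real.cos_arccos (by linarith) (by linarith)
  have hcosj : Real.cos θj = tB := by
    rw [hθj]; exact Real.cos_arccos (by linarith) (by linarith)
  have hcosk : Real.cos θk = tC := by
    rw [hθk]; exact Real.cos_arccos (by linarith) (by linarith)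
  have hsinj : Real.sin θj = Real.sqrt (1 - tB ^ 2) := by
    rw [hθj]; exact Real.sin_arccos _
  have hsink : Real.sin θk = Real.sqrt (1 - tC ^ 2) := by
    rw [hθk]; exact Real.sin_arccos _
  have hθi_pi : θi ≤ Real.pi := by rw [hθi]; exact Real.arccos_le_pi _
  have hθj_pi : θj ≤ Real.pi := by rw [hθj]; exact Real.arccos_le_pi _
  have hθk_pi : θk ≤ Real.pi := by rw [hθk]; exact Real.arccos_le_pi _
  have hθi_nn : 0 ≤ θi := by rw [hθi]; exact Real.arccos_nonneg _
  have hθj_nn : 0 ≤ θj := by rw [hθj]; exact Real.arccos_nonneg _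
  have hθk_nn : 0 ≤ θk := by rw [hθk]; exact Real.arccos_nonneg _
  set D := 2 * A * B * C - A ^ 2 - B ^ 2 - C ^ 2 + 1 with hDdef
  have hD : 0 < D := by
    have hfact : D = (b' * c' - (B * C - A)) * (b' * c' + (B * C - A)) := by
      rw [hDdef]
      linear_combination (-(c' ^ 2)) * hb'2 + (-(B ^ 2 - 1)) * hc'2
    rw [hfact]
    exact mul_pos (by linarith) (by linarith)
  -- θj + θk < π
  have hsumBC : 0 < tB + tC := by
    have hnum : (C * A - B) * b' + (A * B - C) * c'
        = (A - B * C + b' * c') * (b' * C + c' * B) := by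
      linear_combination (-(c' * C)) * hb'2 + (-(b' * B)) * hc'2
    have he : tB + tC = ((C * A - B) * b' + (A * B - C) * c') / (a' * b' * c') := by
      rw [htBdef, htCdef]; field_simp
    rw [he]
    apply div_pos
    · rw [hnum]
      apply mul_pos (by linarith)
      have g1 : 0 < b' * C := mul_pos hb' (by linarith)
      have g2 : 0 < c' * B := mul_pos hc' (by linarith)
      linarith
    · positivity
  have hθjk : θj + θk < Real.pi := by
    by_contra hcon
    push_neg at hcon
    have h1 : Real.pi - θk ≤ θj := by linarith
    have h2 : Real.cos θj ≤ Real.cos (Real.pi - θk) :=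
      Real.cos_le_cos_of_nonneg_of_le_pi (by linarith) hθj_pi h1
    rw [Real.cos_pi_sub, hcosj, hcosk] at h2
    linarith
  have h1B : 0 ≤ 1 - tB ^ 2 := one_sub_sq_nonneg htBm htB1
  have h1C : 0 ≤ 1 - tC ^ 2 := one_sub_sq_nonneg htCm htC1
  have hQ : 0 < a' ^ 2 * b' * c' := by positivity
  have htsum : tA + tB * tC = A * D / (a' ^ 2 * b' * c') := by
    have g1 : tA + tB * tC
        = ((B * C - A) * a' ^ 2 + (C * A - B) * (A * B - C)) / (a' ^ 2 * b' * c') := by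
      rw [htAdef, htBdef, htCdef]; field_simp
    have g2 : (B * C - A) * a' ^ 2 + (C * A - B) * (A * B - C) = A * D := by
      rw [ha'2, hDdef]; ring
    rw [g1, g2]
  have hprod : (1 - tB ^ 2) * (1 - tC ^ 2) = D * D / (a' ^ 2 * b' * c') ^ 2 := by
    have g1 : (1 - tB ^ 2) * (1 - tC ^ 2)
        = (c' ^ 2 * a' ^ 2 - (C * A - B) ^ 2) * (a' ^ 2 * b' ^ 2 - (A * B - C) ^ 2)
          / (a' ^ 2 * b' * c') ^ 2 := by
      rw [htBdef, htCdef]; field_simp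
    have g2 : (c' ^ 2 * a' ^ 2 - (C * A - B) ^ 2) * (a' ^ 2 * b' ^ 2 - (A * B - C) ^ 2)
        = D * D := by
      rw [ha'2, hb'2, hc'2, hDdef]; ring
    rw [g1, g2]
  have htsumpos : 0 < tA + tB * tC := by
    rw [htsum]
    exact div_pos (mul_pos (by linarith) hD) hQ
  have hsq : (1 - tB ^ 2) * (1 - tC ^ 2) < (tA + tB * tC) ^ 2 := by
    rw [htsum, hprod, div_pow]
    exact (div_lt_div_iff_of_pos_right (by positivity)).mpr (DD_lt_sq hA hD)
  have hS2 : (Real.sqrt (1 - tB ^ 2) * Real.sqrt (1 - tC ^ 2)) ^ 2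
      = (1 - tB ^ 2) * (1 - tC ^ 2) := by
    rw [mul_pow, Real.sq_sqrt h1B, Real.sq_sqrt h1C]
  have hstrict : Real.sqrt (1 - tB ^ 2) * Real.sqrt (1 - tC ^ 2) < tA + tB * tC :=
    lt_of_sq_lt_sq'' (by positivity) htsumpos (by rw [hS2]; exact hsq)
  by_contra hcon
  push_neg at hcon
  have h1 : Real.pi - (θj + θk) ≤ θi := by linarith
  have h2 : Real.cos θi ≤ Real.cos (Real.pi - (θj + θk)) :=
    Real.cos_le_cos_of_nonneg_of_le_pi (by linarith) hθi_pi h1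
  rw [Real.cos_pi_sub, Real.cos_add, hcosi, hcosj, hcosk, hsinj, hsink] at h2
  linarith

theorem stmt_10 (Θi Θj Θk : ℝ)
    (hi0 : 0 ≤ Θi) (hi1 : Θi < Real.pi)
    (hj0 : 0 ≤ Θj) (hj1 : Θj < Real.pi)
    (hk0 : 0 ≤ Θk) (hk1 : Θk < Real.pi)
    (hξi : 0 ≤ Real.cos Θi + Real.cos Θj * Real.cos Θk)
    (hξj : 0 ≤ Real.cos Θj + Real.cos Θk * Real.cos Θi)
    (hξk : 0 ≤ Real.cos Θk + Real.cos Θi * Real.cos Θj)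
    (ri rj rk : ℝ) (hri : 0 < ri) (hrj : 0 < rj) (hrk : 0 < rk) :
    (0 < hypAngle (Real.cos Θi) (Real.cos Θj) (Real.cos Θk) ri rj rk ∧
      hypAngle (Real.cos Θi) (Real.cos Θj) (Real.cos Θk) ri rj rk < Real.pi - Θi) ∧
    (0 < hypAngle (Real.cos Θj) (Real.cos Θk) (Real.cos Θi) rj rk ri ∧
      hypAngle (Real.cos Θj) (Real.cos Θk) (Real.cos Θi) rj rk ri < Real.pi - Θj) ∧
    (0 < hypAngle (Real.cos Θk) (Real.cos Θi) (Real.cos Θj) rk ri rj ∧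
      hypAngle (Real.cos Θk) (Real.cos Θi) (Real.cos Θj) rk ri rj < Real.pi - Θk) ∧
    hypAngle (Real.cos Θi) (Real.cos Θj) (Real.cos Θk) ri rj rk
      + hypAngle (Real.cos Θj) (Real.cos Θk) (Real.cos Θi) rj rk ri
      + hypAngle (Real.cos Θk) (Real.cos Θi) (Real.cos Θj) rk ri rj < Real.pi := by
  have hIi : -1 < Real.cos Θi := by
    have := Real.cos_lt_cos_of_nonneg_of_le_pi hi0 (le_refl Real.pi) hi1
    rwa [Real.cos_pi] at this
  have hIj : -1 < Real.cos Θj := by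
    have := Real.cos_lt_cos_of_nonneg_of_le_pi hj0 (le_refl Real.pi) hj1
    rwa [Real.cos_pi] at this
  have hIk : -1 < Real.cos Θk := by
    have := Real.cos_lt_cos_of_nonneg_of_le_pi hk0 (le_refl Real.pi) hk1
    rwa [Real.cos_pi] at this
  have hIi1 : Real.cos Θi ≤ 1 := Real.cos_le_one _
  have hIj1 : Real.cos Θj ≤ 1 := Real.cos_le_one _
  have hIk1 : Real.cos Θk ≤ 1 := Real.cos_le_one _
  obtain ⟨ci1, ci2, ci3⟩ :=
    corner hIi hIi1 hIj hIj1 hIk hIk1 hξi hξj hξk hri hrj hrk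
  obtain ⟨cj1, cj2, cj3⟩ :=
    corner hIj hIj1 hIk hIk1 hIi hIi1 hξj hξk hξi hrj hrk hri
  obtain ⟨ck1, ck2, ck3⟩ :=
    corner hIk hIk1 hIi hIi1 hIj hIj1 hξk hξi hξj hrk hri hrj
  refine ⟨⟨ci1, ?_⟩, ⟨cj1, ?_⟩, ⟨ck1, ?_⟩,
    sum_lt hIi hIi1 hIj hIj1 hIk hIk1 hξi hξj hξk hri hrj hrk⟩
  · by_contra hcon
    push_neg at hcon
    have h2 := Real.cos_le_cos_of_nonneg_of_le_pi (by linarith) ci2 hcon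
    rw [Real.cos_pi_sub] at h2
    linarith
  · by_contra hcon
    push_neg at hcon
    have h2 := Real.cos_le_cos_of_nonneg_of_le_pi (by linarith) cj2 hcon
    rw [Real.cos_pi_sub] at h2
    linarith
  · by_contra hcon
    push_neg at hcon
    have h2 := Real.cos_le_cos_of_nonneg_of_le_pi (by linarith) ck2 hcon
    rw [Real.cos_pi_sub] at h2
    linarith
end

section
/- Assume ξ_i ≥ 0, ξ_j ≥ 0, ξ_k ≥ 0, and let a, b be positive reals. Then the Euclidean inner angle ϑ_i(r_i, r_j, r_k) tends to π − Θ_i as (r_i, r_j, r_k) tends to (0, a, b) within the open positive octant (0,∞)³. -/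
theorem stmt_11 (Θi Θj Θk : ℝ)
    (hi0 : 0 ≤ Θi) (hi1 : Θi < Real.pi)
    (hj0 : 0 ≤ Θj) (hj1 : Θj < Real.pi)
    (hk0 : 0 ≤ Θk) (hk1 : Θk < Real.pi)
    (hξi : 0 ≤ Real.cos Θi + Real.cos Θj * Real.cos Θk)
    (hξj : 0 ≤ Real.cos Θj + Real.cos Θk * Real.cos Θi)
    (hξk : 0 ≤ Real.cos Θk + Real.cos Θi * Real.cos Θj)
    (a b : ℝ) (ha : 0 < a) (hb : 0 < b) :
    Filter.Tendsto
      (fun p : ℝ × ℝ × ℝ =>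
        eucAngle (Real.cos Θi) (Real.cos Θj) (Real.cos Θk) p.1 p.2.1 p.2.2)
      (nhdsWithin (0, a, b) (Set.Ioi 0 ×ˢ Set.Ioi 0 ×ˢ Set.Ioi 0))
      (nhds (Real.pi - Θi)) := by
  have hcont : ContinuousAt
      (fun p : ℝ × ℝ × ℝ =>
        eucAngle (Real.cos Θi) (Real.cos Θj) (Real.cos Θk) p.1 p.2.1 p.2.2)
      (0, a, b) := by
    unfold eucAngle eucLen
    apply Real.continuous_arccos.continuousAt.comp
    apply ContinuousAt.div
    · fun_prop
    · fun_prop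
    · simp only [ne_eq, mul_eq_zero, not_or]
      have h1 : Real.sqrt ((0 : ℝ) ^ 2 + a ^ 2 + 2 * Real.cos Θk * 0 * a) = a := by
        rw [show (0 : ℝ) ^ 2 + a ^ 2 + 2 * Real.cos Θk * 0 * a = a ^ 2 by ring,
          Real.sqrt_sq ha.le]
      have h2 : Real.sqrt (b ^ 2 + (0 : ℝ) ^ 2 + 2 * Real.cos Θj * b * 0) = b := by
        rw [show b ^ 2 + (0 : ℝ) ^ 2 + 2 * Real.cos Θj * b * 0 = b ^ 2 by ring,
          Real.sqrt_sq hb.le]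
      refine ⟨⟨by norm_num, ?_⟩, ?_⟩ <;> simp [h1, h2, Real.sqrt_sq ha.le, Real.sqrt_sq hb.le, ha.ne', hb.ne']
  have hval : eucAngle (Real.cos Θi) (Real.cos Θj) (Real.cos Θk) 0 a b
      = Real.pi - Θi := by
    unfold eucAngle eucLen
    have h1 : Real.sqrt ((0 : ℝ) ^ 2 + a ^ 2 + 2 * Real.cos Θk * 0 * a) = a := by
      rw [show (0 : ℝ) ^ 2 + a ^ 2 + 2 * Real.cos Θk * 0 * a = a ^ 2 by ring,
        Real.sqrt_sq ha.le]
    have h2 : Real.sqrt (b ^ 2 + (0 : ℝ) ^ 2 + 2 * Real.cos Θj * b * 0) = b := by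
      rw [show b ^ 2 + (0 : ℝ) ^ 2 + 2 * Real.cos Θj * b * 0 = b ^ 2 by ring,
        Real.sqrt_sq hb.le]
    have h3 : Real.sqrt (a ^ 2 + b ^ 2 + 2 * Real.cos Θi * a * b) ^ 2
        = a ^ 2 + b ^ 2 + 2 * Real.cos Θi * a * b := by
      apply Real.sq_sqrt
      nlinarith [Real.neg_one_le_cos Θi, sq_nonneg (a - b), sq_nonneg (a + b),
        mul_pos ha hb]
    rw [h1, h2, h3]
    have hab : (2 : ℝ) * b * a ≠ 0 := by positivity
    have harg : (b ^ 2 + a ^ 2 - (a ^ 2 + b ^ 2 + 2 * Real.cos Θi * a * b)) /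
        (2 * b * a) = -Real.cos Θi := by
      field_simp
      ring
    rw [harg, Real.arccos_neg, Real.arccos_cos hi0 hi1.le]
  rw [← hval]
  exact hcont.continuousWithinAt.tendsto
end

section
/- Assume ξ_i ≥ 0, ξ_j ≥ 0, ξ_k ≥ 0, and let a, b be positive reals. Then the hyperbolic inner angle ϑ_i(r_i, r_j, r_k) tends to π − Θ_i as (r_i, r_j, r_k) tends to (0, a, b) within the open positive octant (0,∞)³. -/
theorem stmt_13 (Θi Θj Θk : ℝ)
    (hi0 : 0 ≤ Θi) (hi1 : Θi < Real.pi)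
    (hj0 : 0 ≤ Θj) (hj1 : Θj < Real.pi)
    (hk0 : 0 ≤ Θk) (hk1 : Θk < Real.pi)
    (hξi : 0 ≤ Real.cos Θi + Real.cos Θj * Real.cos Θk)
    (hξj : 0 ≤ Real.cos Θj + Real.cos Θk * Real.cos Θi)
    (hξk : 0 ≤ Real.cos Θk + Real.cos Θi * Real.cos Θj)
    (a b : ℝ) (ha : 0 < a) (hb : 0 < b) :
    Filter.Tendsto
      (fun p : ℝ × ℝ × ℝ =>
        hypAngle (Real.cos Θi) (Real.cos Θj) (Real.cos Θk) p.1 p.2.1 p.2.2)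
      (nhdsWithin (0, a, b) (Set.Ioi 0 ×ˢ Set.Ioi 0 ×ˢ Set.Ioi 0))
      (nhds (Real.pi - Θi)) := by
  have hsa : 0 < Real.sinh a := Real.sinh_pos_iff.2 ha
  have hsb : 0 < Real.sinh b := Real.sinh_pos_iff.2 hb
  have hc1 : Continuous fun p : ℝ × ℝ × ℝ => hypCosh (Real.cos Θj) p.2.2 p.1 := by
    unfold hypCosh; fun_prop
  have hc2 : Continuous fun p : ℝ × ℝ × ℝ => hypCosh (Real.cos Θk) p.1 p.2.1 := by
    unfold hypCosh; fun_prop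
  have hc3 : Continuous fun p : ℝ × ℝ × ℝ => hypCosh (Real.cos Θi) p.2.1 p.2.2 := by
    unfold hypCosh; fun_prop
  have hv1 : hypCosh (Real.cos Θj) b (0:ℝ) = Real.cosh b := by
    simp [hypCosh]
  have hv2 : hypCosh (Real.cos Θk) (0:ℝ) a = Real.cosh a := by
    simp [hypCosh]
  have hsq : ∀ x : ℝ, 0 < x → Real.sqrt (Real.cosh x ^ 2 - 1) = Real.sinh x := by
    intro x hx
    rw [Real.cosh_sq]
    rw [add_sub_cancel_right]
    exact Real.sqrt_sq (Real.sinh_pos_iff.2 hx).le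
  have hden : (Real.sqrt (hypCosh (Real.cos Θj) b (0:ℝ) ^ 2 - 1) *
      Real.sqrt (hypCosh (Real.cos Θk) (0:ℝ) a ^ 2 - 1)) = Real.sinh b * Real.sinh a := by
    rw [hv1, hv2, hsq b hb, hsq a ha]
  have hca : ContinuousAt (fun p : ℝ × ℝ × ℝ =>
      hypAngle (Real.cos Θi) (Real.cos Θj) (Real.cos Θk) p.1 p.2.1 p.2.2)
      ((0 : ℝ), a, b) := by
    unfold hypAngle
    apply Real.continuous_arccos.continuousAt.comp
    apply ContinuousAt.div
    · exact ((hc1.mul hc2).sub hc3).continuousAt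
    · exact ((Real.continuous_sqrt.comp (by fun_prop : Continuous fun p : ℝ × ℝ × ℝ =>
        hypCosh (Real.cos Θj) p.2.2 p.1 ^ 2 - 1)).mul
        (Real.continuous_sqrt.comp (by fun_prop : Continuous fun p : ℝ × ℝ × ℝ =>
        hypCosh (Real.cos Θk) p.1 p.2.1 ^ 2 - 1))).continuousAt
    · show (Real.sqrt (hypCosh (Real.cos Θj) b (0:ℝ) ^ 2 - 1) *
        Real.sqrt (hypCosh (Real.cos Θk) (0:ℝ) a ^ 2 - 1)) ≠ 0
      rw [hden]
      positivity
  have hval : hypAngle (Real.cos Θi) (Real.cos Θj) (Real.cos Θk) 0 a b = Real.pi - Θi := by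
    unfold hypAngle
    rw [hden, hv1, hv2]
    have : (Real.cosh b * Real.cosh a - hypCosh (Real.cos Θi) a b) /
        (Real.sinh b * Real.sinh a) = -Real.cos Θi := by
      unfold hypCosh
      field_simp
      ring
    rw [this, Real.arccos_neg, Real.arccos_cos hi0 hi1.le]
  have := hca.continuousWithinAt (s := Set.Ioi 0 ×ˢ Set.Ioi 0 ×ˢ Set.Ioi 0)
  rw [ContinuousWithinAt, hval] at this
  exact this
end
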